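/- arXiv:2602.09143 — 7 statements merged into one kernel-verified Lean document; each statement's English description precedes it below -/
import Mathlib

section
/- Every separable linearly ordered compact topological space is hereditarily Lindelöf. -/
open Set Topology TopologicalSpace

private lemma isOpen_ordConnectedComponent_of_isOpen
    {X : Type*} [LinearOrder X] [TopologicalSpace X] [OrderTopology X]
    {W : Set X} (hW : IsOpen W) (x : X) :
    IsOpen (ordConnectedComponent W x) := by
  rw [isOpen_iff_mem_nhds]
  intro y hy
  rw [ordConnectedComponent_eq hy]
  exact ordConnectedComponent_mem_nhds.2 (hW.mem_nhds (hy right_mem_uIcc))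

private lemma isLindelof_of_isOpen_aux
    {X : Type*} [LinearOrder X] [TopologicalSpace X] [OrderTopology X]
    [CompactSpace X] [SeparableSpace X] {W : Set X} (hW : IsOpen W) :
    IsLindelof W := by
  classical
  obtain ⟨S, hSc, hSd⟩ := TopologicalSpace.exists_countable_dense X
  set C : X → Set X := fun x => ordConnectedComponent W x with hCdef
  have hCopen : ∀ x, IsOpen (C x) := fun x =>
    isOpen_ordConnectedComponent_of_isOpen hW x
  have hmem : ∀ x ∈ W, (S ∩ C x).Nonempty := by
    intro x hx
    obtain ⟨d, hdS, hdC⟩ := hSd.exists_mem_open (hCopen x)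
      ⟨x, self_mem_ordConnectedComponent.2 hx⟩
    exact ⟨d, hdS, hdC⟩
  set f : X → Option X := fun x =>
    if h : (S ∩ C x).Nonempty then some h.some else none with hfdef
  set L : Set X := {x | x ∈ W ∧ ∀ d ∈ S ∩ C x, x < d} with hLdef
  set R : Set X := {x | x ∈ W ∧ ∀ d ∈ S ∩ C x, d < x} with hRdef
  -- common injectivity/countability machinery
  have himg : ∀ T : Set X, T ⊆ W → (f '' T).Countable := by
    intro T hTW
    refine (hSc.image some).mono ?_
    rintro _ ⟨x, hx, rfl⟩
    have h := hmem x (hTW hx)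
    simp only [hfdef, dif_pos h]
    exact mem_image_of_mem some h.some_mem.1
  have hCeq_of_f : ∀ x ∈ W, ∀ y ∈ W, f x = f y → C x = C y := by
    intro x hx y hy hxy
    have h1 := hmem x hx
    have h2 := hmem y hy
    simp only [hfdef, dif_pos h1, dif_pos h2, Option.some.injEq] at hxy
    have hd1 : h1.some ∈ S ∩ C x := h1.some_mem
    have hd2 : h2.some ∈ S ∩ C y := h2.some_mem
    calc C x = C h1.some := ordConnectedComponent_eq hd1.2
      _ = C h2.some := by rw [hxy]
      _ = C y := (ordConnectedComponent_eq hd2.2).symm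
  have hLkey : ∀ x ∈ L, ∀ y ∈ L, f x = f y → x < y → False := by
    intro x hx y hy hxy hlt
    have hCeq : C x = C y := hCeq_of_f x hx.1 y hy.1 hxy
    have hV : IsOpen (C y ∩ Iio y) := (hCopen y).inter isOpen_Iio
    have hVne : (C y ∩ Iio y).Nonempty :=
      ⟨x, by rw [← hCeq]; exact self_mem_ordConnectedComponent.2 hx.1, hlt⟩
    obtain ⟨s', hs'S, hs'C, hs'lt⟩ := hSd.exists_mem_open hV hVne
    exact absurd (hy.2 s' ⟨hs'S, hs'C⟩) (not_lt.2 hs'lt.le)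
  have hLc : L.Countable := by
    refine countable_of_injective_of_countable_image ?_
      (himg L (fun x hx => hx.1))
    intro x hx y hy hxy
    by_contra hne
    rcases lt_or_gt_of_ne hne with h | h
    · exact hLkey x hx y hy hxy h
    · exact hLkey y hy x hx hxy.symm h
  have hRkey : ∀ x ∈ R, ∀ y ∈ R, f x = f y → x < y → False := by
    intro x hx y hy hxy hlt
    have hCeq : C x = C y := hCeq_of_f x hx.1 y hy.1 hxy
    have hV : IsOpen (C x ∩ Ioi x) := (hCopen x).inter isOpen_Ioi
    have hVne : (C x ∩ Ioi x).Nonempty :=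
      ⟨y, by rw [hCeq]; exact self_mem_ordConnectedComponent.2 hy.1, hlt⟩
    obtain ⟨s', hs'S, hs'C, hs'lt⟩ := hSd.exists_mem_open hV hVne
    exact absurd (hx.2 s' ⟨hs'S, hs'C⟩) (not_lt.2 hs'lt.le)
  have hRc : R.Countable := by
    refine countable_of_injective_of_countable_image ?_
      (himg R (fun x hx => hx.1))
    intro x hx y hy hxy
    by_contra hne
    rcases lt_or_gt_of_ne hne with h | h
    · exact hRkey x hx y hy hxy h
    · exact hRkey y hy x hx hxy.symm h
  -- the compact part
  set P : Set (X × X) := (S ×ˢ S) ∩ {p | Icc p.1 p.2 ⊆ W} with hPdef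
  have hPc : P.Countable := (hSc.prod hSc).mono inter_subset_left
  have hKlin : IsLindelof (⋃ p ∈ P, Icc p.1 p.2) :=
    hPc.isLindelof_biUnion fun p _ => (isClosed_Icc.isCompact).isLindelof
  have hWeq : W = (⋃ p ∈ P, Icc p.1 p.2) ∪ (L ∪ R) := by
    apply Subset.antisymm
    · intro x hx
      by_cases hxL : x ∈ L
      · exact Or.inr (Or.inl hxL)
      by_cases hxR : x ∈ R
      · exact Or.inr (Or.inr hxR)
      left
      simp only [hLdef, mem_setOf_eq, not_and, not_forall] at hxL
      simp only [hRdef, mem_setOf_eq, not_and, not_forall] at hxR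
      obtain ⟨d, hd, hdlt⟩ := hxL hx
      obtain ⟨e, he, helt⟩ := hxR hx
      have hdx : d ≤ x := not_lt.1 hdlt
      have hxe : x ≤ e := not_lt.1 helt
      have hsub : Icc d e ⊆ W := by
        intro z hz
        rcases le_total z x with hzx | hxz
        · exact hd.2 (mem_uIcc.2 (Or.inr ⟨hz.1, hzx⟩))
        · exact he.2 (mem_uIcc.2 (Or.inl ⟨hxz, hz.2⟩))
      exact mem_biUnion (show (d, e) ∈ P from ⟨⟨hd.1, he.1⟩, hsub⟩) ⟨hdx, hxe⟩
    · refine union_subset ?_ (union_subset (fun x hx => hx.1) (fun x hx => hx.1))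
      exact iUnion₂_subset fun p hp => hp.2
  rw [hWeq]
  exact hKlin.union ((hLc.union hRc).isLindelof)

theorem separable_compact_line_hereditarilyLindelof
    (X : Type*) [LinearOrder X] [TopologicalSpace X] [OrderTopology X]
    [CompactSpace X] [TopologicalSpace.SeparableSpace X] :
    HereditarilyLindelofSpace X := by
  refine ⟨fun t _ => ?_⟩
  apply isLindelof_of_countable_subcover
  intro ι U hUo hcov
  have hWlin : IsLindelof (⋃ i, U i) := isLindelof_of_isOpen_aux (isOpen_iUnion hUo)
  obtain ⟨r, hr, hsub⟩ := hWlin.elim_countable_subcover U hUo subset_rfl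
  exact ⟨r, hr, hcov.trans hsub⟩
end

section
/- Every separable linearly ordered compact topological space is hereditarily separable. -/
open Set TopologicalSpace

private lemma sep_aux_right {X : Type*} [LinearOrder X] [TopologicalSpace X] [OrderTopology X]
    {D s E : Set X} (hD : Dense D) {y u : X} (hy : y ∈ s) (_hyu : y < u)
    (hDr : (Ioo y u ∩ D).Nonempty)
    (hpick : ∀ d ∈ D, ∀ d' ∈ D, (s ∩ Ioo d d').Nonempty → ∃ e ∈ E, e ∈ Ioo d d')
    (hmax : ∀ d' ∈ D, ∀ m, IsGreatest (s ∩ Iio d') m → m ∈ E) :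
    ∃ e ∈ E, e ∈ Ico y u := by
  obtain ⟨d', hd'I, hd'D⟩ := hDr
  by_cases hm : ∃ m, IsGreatest (s ∩ Iio d') m
  · obtain ⟨m, hm⟩ := hm
    exact ⟨m, hmax d' hd'D m hm, hm.2 ⟨hy, hd'I.1⟩, lt_trans hm.1.2 hd'I.2⟩
  · push_neg at hm
    obtain ⟨y', hy's, hyy'⟩ : ∃ y' ∈ s ∩ Iio d', y < y' := by
      have h1 := hm y
      rw [IsGreatest, not_and_or] at h1
      rcases h1 with h1 | h1
      · exact absurd ⟨hy, hd'I.1⟩ h1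
      · rw [mem_upperBounds] at h1; push_neg at h1
        obtain ⟨z, hz, hz'⟩ := h1
        exact ⟨z, hz, hz'⟩
    obtain ⟨y'', hy''s, hy'y''⟩ : ∃ y'' ∈ s ∩ Iio d', y' < y'' := by
      have h1 := hm y'
      rw [IsGreatest, not_and_or] at h1
      rcases h1 with h1 | h1
      · exact absurd hy's h1
      · rw [mem_upperBounds] at h1; push_neg at h1
        obtain ⟨z, hz, hz'⟩ := h1
        exact ⟨z, hz, hz'⟩
    obtain ⟨d₀, hd₀I, hd₀D⟩ : (Ioo y y'' ∩ D).Nonempty :=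
      hD.inter_open_nonempty _ isOpen_Ioo ⟨y', hyy', hy'y''⟩
    obtain ⟨e, heE, heI⟩ := hpick d₀ hd₀D d' hd'D ⟨y'', hy''s.1, hd₀I.2, hy''s.2⟩
    exact ⟨e, heE, le_of_lt (lt_trans hd₀I.1 heI.1), lt_trans heI.2 hd'I.2⟩

private lemma sep_aux_left {X : Type*} [LinearOrder X] [TopologicalSpace X] [OrderTopology X]
    {D s E : Set X} (hD : Dense D) {l y : X} (hy : y ∈ s) (_hly : l < y)
    (hDl : (Ioo l y ∩ D).Nonempty)
    (hpick : ∀ d ∈ D, ∀ d' ∈ D, (s ∩ Ioo d d').Nonempty → ∃ e ∈ E, e ∈ Ioo d d')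
    (hmin : ∀ d ∈ D, ∀ m, IsLeast (s ∩ Ioi d) m → m ∈ E) :
    ∃ e ∈ E, e ∈ Ioc l y := by
  obtain ⟨d, hdI, hdD⟩ := hDl
  by_cases hm : ∃ m, IsLeast (s ∩ Ioi d) m
  · obtain ⟨m, hm⟩ := hm
    exact ⟨m, hmin d hdD m hm, lt_trans hdI.1 hm.1.2, hm.2 ⟨hy, hdI.2⟩⟩
  · push_neg at hm
    obtain ⟨y', hy's, hy'y⟩ : ∃ y' ∈ s ∩ Ioi d, y' < y := by
      have h1 := hm y
      rw [IsLeast, not_and_or] at h1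
      rcases h1 with h1 | h1
      · exact absurd ⟨hy, hdI.2⟩ h1
      · rw [mem_lowerBounds] at h1; push_neg at h1
        obtain ⟨z, hz, hz'⟩ := h1
        exact ⟨z, hz, hz'⟩
    obtain ⟨y'', hy''s, hy''y'⟩ : ∃ y'' ∈ s ∩ Ioi d, y'' < y' := by
      have h1 := hm y'
      rw [IsLeast, not_and_or] at h1
      rcases h1 with h1 | h1
      · exact absurd hy's h1
      · rw [mem_lowerBounds] at h1; push_neg at h1
        obtain ⟨z, hz, hz'⟩ := h1
        exact ⟨z, hz, hz'⟩
    obtain ⟨d₀, hd₀I, hd₀D⟩ : (Ioo y'' y ∩ D).Nonempty :=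
      hD.inter_open_nonempty _ isOpen_Ioo ⟨y', hy''y', hy'y⟩
    obtain ⟨e, heE, heI⟩ := hpick d hdD d₀ hd₀D ⟨y'', hy''s.1, hy''s.2, hd₀I.1⟩
    exact ⟨e, heE, lt_trans hdI.1 heI.1, le_of_lt (lt_trans heI.2 hd₀I.2)⟩

theorem separable_compact_line_hereditarilySeparable
    (X : Type*) [LinearOrder X] [TopologicalSpace X] [OrderTopology X]
    [CompactSpace X] [TopologicalSpace.SeparableSpace X] :
    ∀ s : Set X, TopologicalSpace.SeparableSpace s := by
  intro s
  obtain ⟨D, Dc, Dd⟩ := TopologicalSpace.exists_countable_dense X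
  classical
  set pick : X → X → Set X := fun d d' =>
    if h : (s ∩ Ioo d d').Nonempty then {h.some} else ∅ with hpickdef
  set E : Set X := (s ∩ D) ∪ ((⋃ d ∈ D, ⋃ d' ∈ D, pick d d')
      ∪ ((⋃ d' ∈ D, {x | IsGreatest (s ∩ Iio d') x})
        ∪ (⋃ d ∈ D, {x | IsLeast (s ∩ Ioi d) x}))) with hEdef
  -- membership facts
  have hpick : ∀ d ∈ D, ∀ d' ∈ D, (s ∩ Ioo d d').Nonempty → ∃ e ∈ E, e ∈ Ioo d d' := by
    intro d hd d' hd' h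
    refine ⟨h.some, ?_, h.some_mem.2⟩
    refine Or.inr (Or.inl ?_)
    refine mem_biUnion hd (mem_biUnion hd' ?_)
    rw [hpickdef]
    simp only [dif_pos h, mem_singleton_iff]
  have hmax : ∀ d' ∈ D, ∀ m, IsGreatest (s ∩ Iio d') m → m ∈ E := by
    intro d' hd' m hm
    exact Or.inr (Or.inr (Or.inl (mem_biUnion hd' hm)))
  have hmin : ∀ d ∈ D, ∀ m, IsLeast (s ∩ Ioi d) m → m ∈ E := by
    intro d hd m hm
    exact Or.inr (Or.inr (Or.inr (mem_biUnion hd hm)))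
  have hDmem : ∀ y ∈ s, y ∈ D → y ∈ E := fun y hy hyD => Or.inl ⟨hy, hyD⟩
  -- E is a subset of s
  have hEs : E ⊆ s := by
    rintro x (hx | hx | hx | hx)
    · exact hx.1
    · simp only [mem_iUnion] at hx
      obtain ⟨d, _, d', _, hx⟩ := hx
      rw [hpickdef] at hx
      by_cases h : (s ∩ Ioo d d').Nonempty
      · simp only [dif_pos h, mem_singleton_iff] at hx
        rw [hx]; exact h.some_mem.1
      · simp only [dif_neg h] at hx; exact absurd hx (notMem_empty x)
    · simp only [mem_iUnion] at hx
      obtain ⟨d', _, hx⟩ := hx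
      exact hx.1.1
    · simp only [mem_iUnion] at hx
      obtain ⟨d, _, hx⟩ := hx
      exact hx.1.1
  -- E is countable
  have hEc : E.Countable := by
    refine ((Dc.mono inter_subset_right).union (Countable.union ?_ (Countable.union ?_ ?_)))
    · refine Dc.biUnion fun d _ => Dc.biUnion fun d' _ => ?_
      rw [hpickdef]
      by_cases h : (s ∩ Ioo d d').Nonempty
      · simp only [dif_pos h]; exact countable_singleton _
      · simp only [dif_neg h]; exact countable_empty
    · refine Dc.biUnion fun d' _ => Set.Subsingleton.countable ?_
      intro a ha b hb; exact IsGreatest.unique ha hb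
    · refine Dc.biUnion fun d _ => Set.Subsingleton.countable ?_
      intro a ha b hb; exact IsLeast.unique ha hb
  -- key density claim
  have key : ∀ y ∈ s, ∀ U ∈ nhds y, ∃ e ∈ E, e ∈ U := by
    intro y hy U hU
    by_cases hu : ∃ u, y < u
    · obtain ⟨u, hyu, hIco⟩ := exists_Ico_subset_of_mem_nhds hU hu
      by_cases hDr : (Ioo y u ∩ D).Nonempty
      · obtain ⟨e, heE, heI⟩ := sep_aux_right Dd hy hyu hDr hpick hmax
        exact ⟨e, heE, hIco heI⟩
      · -- Ioo y u is empty
        have hIooE : ∀ x, x ∉ Ioo y u := fun x hx =>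
          hDr (Dd.inter_open_nonempty _ isOpen_Ioo ⟨x, hx⟩)
        by_cases hl : ∃ l, l < y
        · obtain ⟨l, hly, hIoc⟩ := exists_Ioc_subset_of_mem_nhds hU hl
          by_cases hDl : (Ioo l y ∩ D).Nonempty
          · obtain ⟨e, heE, heI⟩ := sep_aux_left Dd hy hly hDl hpick hmin
            exact ⟨e, heE, hIoc heI⟩
          · have hIooE' : ∀ x, x ∉ Ioo l y := fun x hx =>
              hDl (Dd.inter_open_nonempty _ isOpen_Ioo ⟨x, hx⟩)
            -- then y is isolated, so y ∈ D
            obtain ⟨z, hzI, hzD⟩ := Dd.inter_open_nonempty (Ioo l u) isOpen_Ioo ⟨y, hly, hyu⟩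
            have hzy : z = y := by
              rcases lt_trichotomy z y with h | h | h
              · exact absurd (mem_Ioo.mpr ⟨hzI.1, h⟩) (hIooE' z)
              · exact h
              · exact absurd (mem_Ioo.mpr ⟨h, hzI.2⟩) (hIooE z)
            exact ⟨y, hDmem y hy (hzy ▸ hzD), mem_of_mem_nhds hU⟩
        · -- y is a bottom element
          push_neg at hl
          obtain ⟨z, hzI, hzD⟩ := Dd.inter_open_nonempty (Iio u) isOpen_Iio ⟨y, hyu⟩
          have hzy : z = y := by
            rcases lt_or_eq_of_le (hl z) with h | h
            · exact absurd (mem_Ioo.mpr ⟨h, hzI⟩) (hIooE z)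
            · exact h.symm
          exact ⟨y, hDmem y hy (hzy ▸ hzD), mem_of_mem_nhds hU⟩
    · -- y is a top element
      push_neg at hu
      by_cases hl : ∃ l, l < y
      · obtain ⟨l, hly, hIoc⟩ := exists_Ioc_subset_of_mem_nhds hU hl
        by_cases hDl : (Ioo l y ∩ D).Nonempty
        · obtain ⟨e, heE, heI⟩ := sep_aux_left Dd hy hly hDl hpick hmin
          exact ⟨e, heE, hIoc heI⟩
        · have hIooE' : ∀ x, x ∉ Ioo l y := fun x hx =>
            hDl (Dd.inter_open_nonempty _ isOpen_Ioo ⟨x, hx⟩)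
          obtain ⟨z, hzI, hzD⟩ := Dd.inter_open_nonempty (Ioi l) isOpen_Ioi ⟨y, hly⟩
          have hzy : z = y := by
            rcases lt_or_eq_of_le (hu z) with h | h
            · exact absurd (mem_Ioo.mpr ⟨hzI, h⟩) (hIooE' z)
            · exact h
          exact ⟨y, hDmem y hy (hzy ▸ hzD), mem_of_mem_nhds hU⟩
      · -- y is both bottom and top: X is a singleton around y
        push_neg at hl
        have : Nonempty X := ⟨y⟩
        obtain ⟨d, hd⟩ := Dd.nonempty
        have : d = y := le_antisymm (hu d) (hl d)
        exact ⟨y, hDmem y hy (this ▸ hd), mem_of_mem_nhds hU⟩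
  -- conclude separability of the subspace
  refine ⟨⟨Subtype.val ⁻¹' E, hEc.preimage Subtype.val_injective, ?_⟩⟩
  intro x
  rw [closure_subtype]
  rw [Subtype.image_preimage_coe, mem_closure_iff_nhds]
  intro U hU
  obtain ⟨e, heE, heU⟩ := key x.1 x.2 U hU
  exact ⟨e, heU, hEs heE, heE⟩
end

section
/- Let K ⊆ [0,1] be a closed set and A ⊆ K. Equip the set K_A = (K × {0}) ∪ (A × {1}) with the order topology induced by the lexicographic order on [0,1] × {0,1}. Then K_A is a compact Hausdorff separable topological space. -/
open Set

/-- The separable compact line `K_A = (K × {0}) ∪ (A × {1})`, realized as a subtype of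
`ℝ ×ₗ Bool` (with `false` playing the role of `0` and `true` the role of `1`),
ordered lexicographically. -/
abbrev KA (K A : Set ℝ) : Type :=
  {p : ℝ ×ₗ Bool // (ofLex p).1 ∈ K ∧ ((ofLex p).2 = true → (ofLex p).1 ∈ A)}

/-- `K_A` carries the order topology of (the restriction of) the lexicographic order. -/
noncomputable instance (K A : Set ℝ) : TopologicalSpace (KA K A) := Preorder.topology (KA K A)

instance (K A : Set ℝ) : OrderTopology (KA K A) := ⟨rfl⟩

namespace KAProof

variable {K A : Set ℝ}

/-- First coordinate of a point of `KA K A`. -/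
def fs (p : KA K A) : ℝ := (ofLex p.1).1

/-- Second coordinate of a point of `KA K A`. -/
def sn (p : KA K A) : Bool := (ofLex p.1).2

lemma fs_mem (p : KA K A) : fs p ∈ K := p.2.1

lemma mem_A_of_sn (p : KA K A) (h : sn p = true) : fs p ∈ A := p.2.2 h

/-- Build a point of `KA K A`. -/
def mk (x : ℝ) (b : Bool) (hx : x ∈ K) (hb : b = true → x ∈ A) : KA K A :=
  ⟨toLex (x, b), hx, hb⟩

@[simp] lemma fs_mk (x : ℝ) (b : Bool) (hx : x ∈ K) (hb : b = true → x ∈ A) :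
    fs (mk x b hx hb) = x := rfl

@[simp] lemma sn_mk (x : ℝ) (b : Bool) (hx : x ∈ K) (hb : b = true → x ∈ A) :
    sn (mk x b hx hb) = b := rfl

lemma le_iff {p q : KA K A} : p ≤ q ↔ fs p < fs q ∨ (fs p = fs q ∧ sn p ≤ sn q) := by
  rw [← Subtype.coe_le_coe]
  exact Prod.Lex.le_iff

lemma lt_iff {p q : KA K A} : p < q ↔ fs p < fs q ∨ (fs p = fs q ∧ sn p < sn q) := by
  rw [← Subtype.coe_lt_coe]
  exact Prod.Lex.lt_iff

lemma bddAboveK (hKsub : K ⊆ Icc 0 1) : BddAbove K := ⟨1, fun _ hx => (hKsub hx).2⟩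

lemma bddBelowK (hKsub : K ⊆ Icc 0 1) : BddBelow K := ⟨0, fun _ hx => (hKsub hx).1⟩

lemma sSup_image_mem (hKsub : K ⊆ Icc 0 1) (hKcl : IsClosed K) {S : Set (KA K A)}
    (hS : S.Nonempty) : sSup (fs '' S) ∈ K := by
  have himg : fs '' S ⊆ K := by rintro _ ⟨p, -, rfl⟩; exact fs_mem p
  have h1 : sSup (fs '' S) ∈ closure (fs '' S) :=
    csSup_mem_closure (hS.image fs) ((bddAboveK hKsub).mono himg)
  exact closure_minimal himg hKcl h1

open Classical in
/-- The supremum of a set in `KA K A`. -/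
noncomputable def kaSup (K A : Set ℝ) (hKsub : K ⊆ Icc 0 1) (hKcl : IsClosed K)
    (hKne : K.Nonempty) (S : Set (KA K A)) : KA K A :=
  if hS : S.Nonempty then
    if h2 : ∃ p ∈ S, fs p = sSup (fs '' S) ∧ sn p = true then
      mk (sSup (fs '' S)) true (sSup_image_mem hKsub hKcl hS)
        (fun _ => by obtain ⟨p, -, h1, h2'⟩ := h2; exact h1 ▸ mem_A_of_sn p h2')
    else
      mk (sSup (fs '' S)) false (sSup_image_mem hKsub hKcl hS) (fun h => Bool.noConfusion h)
  else
    mk (sInf K) false (hKcl.csInf_mem hKne (bddBelowK hKsub)) (fun h => Bool.noConfusion h)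

lemma kaSup_isLUB (hKsub : K ⊆ Icc 0 1) (hKcl : IsClosed K) (hKne : K.Nonempty)
    (S : Set (KA K A)) : IsLUB S (kaSup K A hKsub hKcl hKne S) := by
  classical
  by_cases hS : S.Nonempty
  · have himg : fs '' S ⊆ K := by rintro _ ⟨p, -, rfl⟩; exact fs_mem p
    have hbdd : BddAbove (fs '' S) := (bddAboveK hKsub).mono himg
    by_cases h2 : ∃ p ∈ S, fs p = sSup (fs '' S) ∧ sn p = true
    · rw [kaSup, dif_pos hS, dif_pos h2]
      constructor
      · intro p hp
        rcases eq_or_lt_of_le (le_csSup hbdd ⟨p, hp, rfl⟩) with heq | hlt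
        · exact le_iff.mpr (Or.inr ⟨heq, by simp [Bool.le_true]⟩)
        · exact le_iff.mpr (Or.inl hlt)
      · intro z hz
        have hub : sSup (fs '' S) ≤ fs z := by
          refine csSup_le (hS.image fs) ?_
          rintro _ ⟨p, hp, rfl⟩
          rcases le_iff.mp (hz hp) with h | ⟨h, -⟩
          exacts [h.le, h.le]
        rcases lt_or_eq_of_le hub with hlt | heq
        · exact le_iff.mpr (Or.inl hlt)
        · refine le_iff.mpr (Or.inr ⟨heq, ?_⟩)
          obtain ⟨p, hp, hp1, hp2⟩ := h2
          rcases le_iff.mp (hz hp) with h | ⟨-, h⟩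
          · rw [hp1, heq] at h; exact absurd h (lt_irrefl _)
          · rw [hp2] at h
            simpa using h
    · rw [kaSup, dif_pos hS, dif_neg h2]
      constructor
      · intro p hp
        rcases eq_or_lt_of_le (le_csSup hbdd ⟨p, hp, rfl⟩) with heq | hlt
        · refine le_iff.mpr (Or.inr ⟨heq, ?_⟩)
          have hsn : sn p = false := by
            cases hsn : sn p
            · rfl
            · exact absurd ⟨p, hp, heq, hsn⟩ h2
          simp [hsn]
        · exact le_iff.mpr (Or.inl hlt)
      · intro z hz
        have hub : sSup (fs '' S) ≤ fs z := by
          refine csSup_le (hS.image fs) ?_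
          rintro _ ⟨p, hp, rfl⟩
          rcases le_iff.mp (hz hp) with h | ⟨h, -⟩
          exacts [h.le, h.le]
        rcases lt_or_eq_of_le hub with hlt | heq
        · exact le_iff.mpr (Or.inl hlt)
        · exact le_iff.mpr (Or.inr ⟨heq, by simp [Bool.false_le]⟩)
  · rw [kaSup, dif_neg hS]
    constructor
    · intro p hp
      exact absurd ⟨p, hp⟩ hS
    · intro z _
      rcases lt_or_eq_of_le (csInf_le (bddBelowK hKsub) (fs_mem z)) with h | h
      · exact le_iff.mpr (Or.inl h)
      · exact le_iff.mpr (Or.inr ⟨h, by simp [Bool.false_le]⟩)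

/-- Points of `K` isolated from the right within `K`. -/
def Eset (K : Set ℝ) : Set ℝ :=
  {x | x ∈ K ∧ ∃ q : ℚ, x < (q : ℝ) ∧ ∀ y ∈ K, x < y → (q : ℝ) ≤ y}

/-- Points of `K` isolated from the left within `K`. -/
def Fset (K : Set ℝ) : Set ℝ :=
  {x | x ∈ K ∧ ∃ q : ℚ, (q : ℝ) < x ∧ ∀ y ∈ K, y < x → y ≤ (q : ℝ)}

lemma countable_Eset : (Eset K).Countable := by
  have hsub : Eset K ⊆ ⋃ q : ℚ, {x | x ∈ K ∧ x < (q : ℝ) ∧ ∀ y ∈ K, x < y → (q : ℝ) ≤ y} := by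
    rintro x ⟨hxK, q, h1, h2⟩
    exact mem_iUnion.mpr ⟨q, hxK, h1, h2⟩
  refine Set.Countable.mono hsub (countable_iUnion fun q => ?_)
  apply Set.Subsingleton.countable
  rintro x ⟨hx, hxq, hxgap⟩ y ⟨hy, hyq, hygap⟩
  by_contra hne
  rcases lt_or_gt_of_ne hne with h | h
  · exact absurd (hxgap y hy h) (not_le.mpr hyq)
  · exact absurd (hygap x hx h) (not_le.mpr hxq)

lemma countable_Fset : (Fset K).Countable := by
  have hsub : Fset K ⊆ ⋃ q : ℚ, {x | x ∈ K ∧ (q : ℝ) < x ∧ ∀ y ∈ K, y < x → y ≤ (q : ℝ)} := by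
    rintro x ⟨hxK, q, h1, h2⟩
    exact mem_iUnion.mpr ⟨q, hxK, h1, h2⟩
  refine Set.Countable.mono hsub (countable_iUnion fun q => ?_)
  apply Set.Subsingleton.countable
  rintro x ⟨hx, hxq, hxgap⟩ y ⟨hy, hyq, hygap⟩
  by_contra hne
  rcases lt_or_gt_of_ne hne with h | h
  · exact absurd (hygap x hx h) (not_le.mpr hxq)
  · exact absurd (hxgap y hy h) (not_le.mpr hyq)

lemma exists_C0 (K : Set ℝ) :
    ∃ C0 ⊆ K, C0.Countable ∧
      ∀ a b : ℝ, (∃ y ∈ K, a < y ∧ y < b) → ∃ z ∈ C0, a < z ∧ z < b := by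
  obtain ⟨t, htc, htd⟩ := TopologicalSpace.exists_countable_dense (↥K)
  refine ⟨Subtype.val '' t, by rintro _ ⟨y, -, rfl⟩; exact y.2, htc.image _, ?_⟩
  intro a b hex
  obtain ⟨y, hyK, hy1, hy2⟩ := hex
  have hne : ((Subtype.val : ↥K → ℝ) ⁻¹' Ioo a b).Nonempty := ⟨⟨y, hyK⟩, hy1, hy2⟩
  have hopen : IsOpen ((Subtype.val : ↥K → ℝ) ⁻¹' Ioo a b) :=
    isOpen_Ioo.preimage continuous_subtype_val
  obtain ⟨z, hz1, hz2⟩ := htd.inter_open_nonempty _ hopen hne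
  exact ⟨z.val, ⟨z, hz2, rfl⟩, hz1.1, hz1.2⟩

end KAProof

open KAProof in
theorem KA_compact_t2_separable (K A : Set ℝ)
    (hKsub : K ⊆ Set.Icc 0 1) (hKcl : IsClosed K) (hAK : A ⊆ K) :
    CompactSpace (KA K A) ∧ T2Space (KA K A) ∧ TopologicalSpace.SeparableSpace (KA K A) := by
  classical
  refine ⟨?_, inferInstance, ?_⟩
  · -- Compactness
    rcases isEmpty_or_nonempty (KA K A) with he | hne
    · exact ⟨by rw [Set.univ_eq_empty_iff.mpr he]; exact isCompact_empty⟩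
    · obtain ⟨p0⟩ := hne
      have hKne : K.Nonempty := ⟨fs p0, fs_mem p0⟩
      letI : SupSet (KA K A) := ⟨kaSup K A hKsub hKcl hKne⟩
      have hlub : ∀ S : Set (KA K A), IsLUB S (sSup S) := kaSup_isLUB hKsub hKcl hKne
      letI ccl : ConditionallyCompleteLattice (KA K A) :=
        conditionallyCompleteLatticeOfLatticeOfsSup (KA K A) (fun S _ _ => hlub S)
      have hbot : ∀ z : KA K A, sSup (∅ : Set (KA K A)) ≤ z := fun z =>
        (hlub ∅).2 (fun y hy => absurd hy (Set.notMem_empty y))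
      have htop : ∀ z : KA K A, z ≤ sSup (Set.univ : Set (KA K A)) := fun z =>
        (hlub Set.univ).1 (Set.mem_univ z)
      letI : ConditionallyCompleteLinearOrder (KA K A) :=
        { ccl, (inferInstance : LinearOrder (KA K A)) with
          csSup_of_not_bddAbove := fun s hs =>
            absurd ⟨sSup Set.univ, fun x _ => htop x⟩ hs
          csInf_of_not_bddBelow := fun s hs =>
            absurd ⟨sSup (∅ : Set (KA K A)), fun x _ => hbot x⟩ hs }
      haveI : OrderTopology (KA K A) := ⟨rfl⟩
      refine ⟨?_⟩
      have huniv : (Set.univ : Set (KA K A)) =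
          Set.Icc (sSup (∅ : Set (KA K A))) (sSup (Set.univ : Set (KA K A))) := by
        ext z
        simp only [Set.mem_univ, Set.mem_Icc, true_iff]
        exact ⟨hbot z, htop z⟩
      rw [huniv]
      exact isCompact_Icc
  · -- Separability
    obtain ⟨C0, hC0K, hC0c, hC0d⟩ := exists_C0 K
    set C : Set ℝ := C0 ∪ (Eset K ∪ Fset K) with hC
    have hCc : C.Countable := hC0c.union (countable_Eset.union countable_Fset)
    set D : Set (KA K A) := {p | fs p ∈ C} with hD
    have hDc : D.Countable := by
      have hinj : Function.Injective (fun p : KA K A => ((fs p, sn p) : ℝ × Bool)) := by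
        intro p q h
        exact Subtype.ext h
      have : D ⊆ (fun p : KA K A => ((fs p, sn p) : ℝ × Bool)) ⁻¹' (C ×ˢ Set.univ) := by
        intro p hp
        exact ⟨hp, Set.mem_univ _⟩
      exact ((hCc.prod Set.countable_univ).preimage hinj).mono this
    refine ⟨⟨D, hDc, fun p => ?_⟩⟩
    by_cases hpC : fs p ∈ C
    · exact subset_closure hpC
    · have hxK : fs p ∈ K := fs_mem p
      have hxE : fs p ∉ Eset K := fun h => hpC (Or.inr (Or.inl h))
      have hxF : fs p ∉ Fset K := fun h => hpC (Or.inr (Or.inr h))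
      have hright : ∀ b : ℝ, fs p < b → ∃ z ∈ C0, fs p < z ∧ z < b := by
        intro b hb
        obtain ⟨q, hq1, hq2⟩ := exists_rat_btwn hb
        have hy : ∃ y ∈ K, fs p < y ∧ y < (q : ℝ) := by
          by_contra hcon
          push_neg at hcon
          exact hxE ⟨hxK, q, hq1, fun y hy hxy => hcon y hy hxy⟩
        obtain ⟨y, hyK, hy1, hy2⟩ := hy
        exact hC0d (fs p) b ⟨y, hyK, hy1, hy2.trans hq2⟩
      have hleft : ∀ a : ℝ, a < fs p → ∃ z ∈ C0, a < z ∧ z < fs p := by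
        intro a ha
        obtain ⟨q, hq1, hq2⟩ := exists_rat_btwn ha
        have hy : ∃ y ∈ K, (q : ℝ) < y ∧ y < fs p := by
          by_contra hcon
          push_neg at hcon
          refine hxF ⟨hxK, q, hq2, fun y hy hylt => not_lt.mp (fun hq => ?_)⟩
          exact absurd hylt (not_lt.mpr (hcon y hy hq))
        obtain ⟨y, hyK, hy1, hy2⟩ := hy
        exact hC0d a (fs p) ⟨y, hyK, hq1.trans hy1, hy2⟩
      have hbelow : ∃ l, l < p := by
        obtain ⟨z, hz0, -, hz2⟩ := hleft (fs p - 1) (by linarith)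
        exact ⟨mk z false (hC0K hz0) (fun h => Bool.noConfusion h), lt_iff.mpr (Or.inl hz2)⟩
      have habove : ∃ u, p < u := by
        obtain ⟨z, hz0, hz1, -⟩ := hright (fs p + 1) (by linarith)
        exact ⟨mk z false (hC0K hz0) (fun h => Bool.noConfusion h), lt_iff.mpr (Or.inl hz1)⟩
      rw [mem_closure_iff_nhds]
      intro t ht
      obtain ⟨l, u, hplu, hsub⟩ := (mem_nhds_iff_exists_Ioo_subset' hbelow habove).mp ht
      rcases lt_iff.mp hplu.2 with h | ⟨heq, hsn⟩
      · obtain ⟨z, hz0, hz1, hz2⟩ := hright (fs u) h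
        refine ⟨mk z false (hC0K hz0) (fun h' => Bool.noConfusion h'),
          hsub ⟨lt_trans hplu.1 (lt_iff.mpr (Or.inl hz1)), lt_iff.mpr (Or.inl hz2)⟩, ?_⟩
        exact Set.mem_union_left _ hz0
      · have hl : fs l < fs p := by
          rcases lt_iff.mp hplu.1 with h' | ⟨h', hsn'⟩
          · exact h'
          · have hpf : sn p = false := (Bool.lt_iff.mp hsn).1
            rw [hpf] at hsn'
            exact absurd hsn' (by simp)
        obtain ⟨z, hz0, hz1, hz2⟩ := hleft (fs l) hl
        refine ⟨mk z false (hC0K hz0) (fun h' => Bool.noConfusion h'),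
          hsub ⟨lt_iff.mpr (Or.inl hz1), lt_iff.mpr (Or.inl (heq ▸ hz2))⟩, ?_⟩
        exact Set.mem_union_left _ hz0
end

section
/- Let K ⊆ [0,1] be closed and A ⊆ K with A infinite. Then the space K_A = (K × {0}) ∪ (A × {1}), with the order topology from the lexicographic order, has topological weight equal to the cardinality of A. -/
open Set

/-- The topological weight of a space: the least cardinality of a topological basis. -/
noncomputable def weight (X : Type) [TopologicalSpace X] : Cardinal :=
  sInf {c : Cardinal | ∃ B : Set (Set X), TopologicalSpace.IsTopologicalBasis B ∧ Cardinal.mk B = c}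

lemma KA_le_iff {K A : Set ℝ} (x y : KA K A) :
    x ≤ y ↔ (ofLex x.1).1 < (ofLex y.1).1 ∨ ((ofLex x.1).1 = (ofLex y.1).1 ∧ (ofLex x.1).2 ≤ (ofLex y.1).2) := by
  rw [← Subtype.coe_le_coe]
  exact Prod.Lex.le_iff

lemma KA_lt_iff {K A : Set ℝ} (x y : KA K A) :
    x < y ↔ (ofLex x.1).1 < (ofLex y.1).1 ∨ ((ofLex x.1).1 = (ofLex y.1).1 ∧ (ofLex x.1).2 < (ofLex y.1).2) := by
  rw [← Subtype.coe_lt_coe]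
  exact Prod.Lex.lt_iff

lemma KA_dense_picks (K : Set ℝ) : ∃ Q : Set ℝ, Q.Countable ∧ Q ⊆ K ∧
    ∀ s t : ℝ, (K ∩ Ioo s t).Nonempty → (Q ∩ Ioo s t).Nonempty := by
  choose c hc using fun (q : {q : ℚ × ℚ // (K ∩ Ioo (q.1 : ℝ) (q.2 : ℝ)).Nonempty}) => q.2
  refine ⟨range c, countable_range c, ?_, ?_⟩
  · rintro x ⟨q, rfl⟩; exact (hc q).1
  · rintro s t ⟨k, hkK, hks, hkt⟩
    obtain ⟨q1, hq1, hq1'⟩ := exists_rat_btwn hks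
    obtain ⟨q2, hq2, hq2'⟩ := exists_rat_btwn hkt
    have hne : (K ∩ Ioo ((q1 : ℝ)) (q2 : ℝ)).Nonempty := ⟨k, hkK, hq1', hq2⟩
    exact ⟨c ⟨(q1, q2), hne⟩, mem_range_self _,
      lt_trans hq1 (hc ⟨(q1, q2), hne⟩).2.1, lt_trans (hc ⟨(q1, q2), hne⟩).2.2 hq2'⟩

lemma KA_right_isolated_countable (K : Set ℝ) :
    {s | s ∈ K ∧ ∃ t, s < t ∧ K ∩ Ioo s t = ∅}.Countable := by
  set R := {s | s ∈ K ∧ ∃ t, s < t ∧ K ∩ Ioo s t = ∅} with hR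
  have h : ∀ s : R, ∃ q : ℚ, (s : ℝ) < q ∧ ∃ t, (q : ℝ) < t ∧ K ∩ Ioo (s : ℝ) t = ∅ := by
    rintro ⟨s, hsK, t, hst, hgap⟩
    obtain ⟨q, hq1, hq2⟩ := exists_rat_btwn hst
    exact ⟨q, hq1, t, hq2, hgap⟩
  choose f hf1 hf2 using h
  rw [← Set.countable_coe_iff]
  refine Function.Injective.countable (f := f) ?_
  intro a b hab
  by_contra hne
  have hne' : (a : ℝ) ≠ b := fun h => hne (Subtype.ext h)
  rcases hne'.lt_or_gt with h | h
  · obtain ⟨t1, hqt1, hgap1⟩ := hf2 a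
    have : (b : ℝ) ∈ K ∩ Ioo (a : ℝ) t1 := ⟨b.2.1, h, lt_of_lt_of_eq (hf1 b) (congrArg _ hab.symm) |>.trans hqt1⟩
    rw [hgap1] at this; exact this
  · obtain ⟨t1, hqt1, hgap1⟩ := hf2 b
    have : (a : ℝ) ∈ K ∩ Ioo (b : ℝ) t1 := ⟨a.2.1, h, lt_of_lt_of_eq (hf1 a) (congrArg _ hab) |>.trans hqt1⟩
    rw [hgap1] at this; exact this

lemma KA_left_isolated_countable (K : Set ℝ) :
    {s | s ∈ K ∧ ∃ t, t < s ∧ K ∩ Ioo t s = ∅}.Countable := by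
  set L := {s | s ∈ K ∧ ∃ t, t < s ∧ K ∩ Ioo t s = ∅} with hL
  have h : ∀ s : L, ∃ q : ℚ, (q : ℝ) < s ∧ ∃ t, t < (q : ℝ) ∧ K ∩ Ioo t (s : ℝ) = ∅ := by
    rintro ⟨s, hsK, t, hst, hgap⟩
    obtain ⟨q, hq1, hq2⟩ := exists_rat_btwn hst
    exact ⟨q, hq2, t, hq1, hgap⟩
  choose f hf1 hf2 using h
  rw [← Set.countable_coe_iff]
  refine Function.Injective.countable (f := f) ?_
  intro a b hab
  by_contra hne
  have hne' : (a : ℝ) ≠ b := fun h => hne (Subtype.ext h)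
  rcases hne'.lt_or_gt with h | h
  · obtain ⟨t2, ht2, hgap2⟩ := hf2 b
    have : (a : ℝ) ∈ K ∩ Ioo t2 (b : ℝ) :=
      ⟨a.2.1, ht2.trans (lt_of_eq_of_lt (congrArg _ hab.symm) (hf1 a)), h⟩
    rw [hgap2] at this; exact this
  · obtain ⟨t2, ht2, hgap2⟩ := hf2 a
    have : (b : ℝ) ∈ K ∩ Ioo t2 (a : ℝ) :=
      ⟨b.2.1, ht2.trans (lt_of_eq_of_lt (congrArg _ hab) (hf1 b)), h⟩
    rw [hgap2] at this; exact this

lemma KA_upper (K A : Set ℝ) (hAK : A ⊆ K) (hAinf : A.Infinite) :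
    ∃ B : Set (Set (KA K A)), TopologicalSpace.IsTopologicalBasis B ∧
      Cardinal.mk B ≤ Cardinal.mk A := by
  classical
  obtain ⟨Q, hQc, hQK, hQd⟩ := KA_dense_picks K
  set R := {s | s ∈ K ∧ ∃ t, s < t ∧ K ∩ Ioo s t = ∅} with hRdef
  set L := {s | s ∈ K ∧ ∃ t, t < s ∧ K ∩ Ioo t s = ∅} with hLdef
  have hRc := KA_right_isolated_countable K
  have hLc := KA_left_isolated_countable K
  set G : Set ℝ := (Q ∪ (R ∪ L)) ∪ A with hGdef
  set E : Set (KA K A) := {x | (ofLex x.1).1 ∈ G} with hEdef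
  set B : Set (Set (KA K A)) :=
    insert univ ((Ioi '' E ∪ Iio '' E) ∪ image2 Ioo E E) with hBdef
  -- Key interval lemmas
  have left : ∀ p x : KA K A, p < x → ∃ e ∈ E, p ≤ e ∧ e < x := by
    intro p x hpx
    rcases (KA_lt_iff p x).mp hpx with hst | ⟨heq, hb⟩
    · by_cases hK : (K ∩ Ioo (ofLex p.1).1 (ofLex x.1).1).Nonempty
      · obtain ⟨q, hqQ, hq1, hq2⟩ := hQd _ _ hK
        refine ⟨⟨toLex (q, false), hQK hqQ, fun h => by simp at h⟩, ?_, ?_, ?_⟩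
        · exact Or.inl (Or.inl hqQ)
        · exact le_of_lt ((KA_lt_iff _ _).mpr (Or.inl hq1))
        · exact (KA_lt_iff _ _).mpr (Or.inl hq2)
      · refine ⟨p, ?_, le_refl p, hpx⟩
        rcases hbp : (ofLex p.1).2 with _ | _
        · exact Or.inl (Or.inr (Or.inl ⟨p.2.1, (ofLex x.1).1, hst,
            not_nonempty_iff_eq_empty.mp hK⟩))
        · exact Or.inr (p.2.2 hbp)
    · -- same first coordinate, bools differ: x has bool true so its coord is in A
      refine ⟨p, ?_, le_refl p, hpx⟩
      have hx2 : (ofLex x.1).2 = true := by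
        revert hb; rcases (ofLex x.1).2 <;> simp [Bool.lt_iff]
      exact Or.inr (heq ▸ (x.2.2 hx2))
  have right : ∀ x p : KA K A, x < p → ∃ e ∈ E, x < e ∧ e ≤ p := by
    intro x p hxp
    rcases (KA_lt_iff x p).mp hxp with hst | ⟨heq, hb⟩
    · by_cases hK : (K ∩ Ioo (ofLex x.1).1 (ofLex p.1).1).Nonempty
      · obtain ⟨q, hqQ, hq1, hq2⟩ := hQd _ _ hK
        refine ⟨⟨toLex (q, false), hQK hqQ, fun h => by simp at h⟩, ?_, ?_, ?_⟩
        · exact Or.inl (Or.inl hqQ)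
        · exact (KA_lt_iff _ _).mpr (Or.inl hq1)
        · exact le_of_lt ((KA_lt_iff _ _).mpr (Or.inl hq2))
      · refine ⟨p, ?_, hxp, le_refl p⟩
        rcases hbp : (ofLex p.1).2 with _ | _
        · exact Or.inl (Or.inr (Or.inr ⟨p.2.1, (ofLex x.1).1, hst,
            not_nonempty_iff_eq_empty.mp hK⟩))
        · exact Or.inr (p.2.2 hbp)
    · refine ⟨p, ?_, hxp, le_refl p⟩
      have hp2 : (ofLex p.1).2 = true := by
        revert hb; rcases (ofLex p.1).2 <;> simp [Bool.lt_iff]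
      exact Or.inr (p.2.2 hp2)
  -- B is a basis
  have hbasis : TopologicalSpace.IsTopologicalBasis B := by
    refine TopologicalSpace.isTopologicalBasis_of_isOpen_of_nhds ?_ ?_
    · rintro u hu
      rcases hu with rfl | hu
      · exact isOpen_univ
      rcases hu with (⟨e, _, rfl⟩ | ⟨e, _, rfl⟩) | hu
      · exact isOpen_Ioi
      · exact isOpen_Iio
      · obtain ⟨e1, _, e2, _, rfl⟩ := hu
        exact isOpen_Ioo
    · intro x u hxu hu
      have hnh : u ∈ nhds x := hu.mem_nhds hxu
      by_cases hl : ∃ l, l < x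
      · by_cases hr : ∃ r, x < r
        · obtain ⟨l, hlx, hIoc⟩ := exists_Ioc_subset_of_mem_nhds hnh hl
          obtain ⟨r, hxr, hIco⟩ := exists_Ico_subset_of_mem_nhds hnh hr
          obtain ⟨e1, he1E, hle1, he1x⟩ := left l x hlx
          obtain ⟨e2, he2E, hxe2, he2r⟩ := right x r hxr
          refine ⟨Ioo e1 e2, ?_, ⟨he1x, hxe2⟩, ?_⟩
          · exact mem_insert_of_mem _ (Or.inr (mem_image2_of_mem he1E he2E))
          · rintro y ⟨h1, h2⟩
            rcases le_or_gt y x with hyx | hxy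
            · exact hIoc ⟨lt_of_le_of_lt hle1 h1, hyx⟩
            · exact hIco ⟨le_of_lt hxy, lt_of_lt_of_le h2 he2r⟩
        · obtain ⟨l, hlx, hIoc⟩ := exists_Ioc_subset_of_mem_nhds hnh hl
          obtain ⟨e1, he1E, hle1, he1x⟩ := left l x hlx
          refine ⟨Ioi e1, ?_, he1x, fun y hy => ?_⟩
          · exact mem_insert_of_mem _ (Or.inl (Or.inl (mem_image_of_mem _ he1E)))
          · exact hIoc ⟨lt_of_le_of_lt hle1 hy, le_of_not_gt fun h => hr ⟨y, h⟩⟩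
      · by_cases hr : ∃ r, x < r
        · obtain ⟨r, hxr, hIco⟩ := exists_Ico_subset_of_mem_nhds hnh hr
          obtain ⟨e2, he2E, hxe2, he2r⟩ := right x r hxr
          refine ⟨Iio e2, ?_, hxe2, fun y hy => ?_⟩
          · exact mem_insert_of_mem _ (Or.inl (Or.inr (mem_image_of_mem _ he2E)))
          · exact hIco ⟨le_of_not_gt fun h => hl ⟨y, h⟩, lt_of_lt_of_le hy he2r⟩
        · refine ⟨univ, mem_insert _ _, trivial, fun y _ => ?_⟩
          have h1 : y ≤ x := le_of_not_gt fun h => hr ⟨y, h⟩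
          have h2 : x ≤ y := le_of_not_gt fun h => hl ⟨y, h⟩
          exact (le_antisymm h1 h2) ▸ hxu
  -- cardinality bound
  have hAinfc : Cardinal.aleph0 ≤ Cardinal.mk A := by
    haveI := hAinf.to_subtype
    exact Cardinal.aleph0_le_mk _
  have hGle : Cardinal.mk G ≤ Cardinal.mk A := by
    calc Cardinal.mk G ≤ Cardinal.mk ↥(Q ∪ (R ∪ L)) + Cardinal.mk ↥A := Cardinal.mk_union_le _ _
      _ ≤ Cardinal.aleph0 + Cardinal.mk ↥A := by
          haveI := (hQc.union (hRc.union hLc)).to_subtype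
          exact add_le_add_left Cardinal.mk_le_aleph0 _
      _ = Cardinal.mk ↥A := Cardinal.add_eq_right hAinfc hAinfc
  have hEle : Cardinal.mk E ≤ Cardinal.mk A := by
    have hinj : Function.Injective
        (fun x : E => ((⟨(ofLex x.1.1).1, x.2⟩ : G), (ofLex x.1.1).2)) := by
      intro x y h
      obtain ⟨h1, h2⟩ := Prod.mk.injEq .. ▸ h
      have h1' : (ofLex x.1.1).1 = (ofLex y.1.1).1 := congrArg Subtype.val h1
      have : (ofLex x.1.1) = (ofLex y.1.1) := Prod.ext h1' h2
      exact Subtype.ext (Subtype.ext this)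
    calc Cardinal.mk E ≤ Cardinal.mk (↥G × Bool) := Cardinal.mk_le_of_injective hinj
      _ = Cardinal.mk G * 2 := by simp [Cardinal.mk_prod]
      _ ≤ Cardinal.mk ↥A * Cardinal.mk ↥A := by
          refine mul_le_mul' hGle (le_trans ?_ hAinfc)
          simpa using (Cardinal.nat_lt_aleph0 2).le
      _ = Cardinal.mk ↥A := Cardinal.mul_eq_self hAinfc
  refine ⟨B, hbasis, ?_⟩
  have h1le : (1 : Cardinal) ≤ Cardinal.mk ↥A := le_trans Cardinal.one_le_aleph0 hAinfc
  have hImg1 : Cardinal.mk ↥(Ioi '' E ∪ Iio '' E) ≤ Cardinal.mk ↥A := by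
    calc Cardinal.mk ↥(Ioi '' E ∪ Iio '' E)
        ≤ Cardinal.mk ↥(Ioi '' E) + Cardinal.mk ↥(Iio '' E) := Cardinal.mk_union_le _ _
      _ ≤ Cardinal.mk ↥A + Cardinal.mk ↥A :=
          add_le_add (le_trans Cardinal.mk_image_le hEle) (le_trans Cardinal.mk_image_le hEle)
      _ = Cardinal.mk ↥A := Cardinal.add_eq_right hAinfc le_rfl
  have hImg2 : Cardinal.mk ↥(image2 Ioo E E) ≤ Cardinal.mk ↥A := by
    calc Cardinal.mk ↥(image2 Ioo E E) ≤ Cardinal.mk ↥E * Cardinal.mk ↥E := Cardinal.mk_image2_le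
      _ ≤ Cardinal.mk ↥A * Cardinal.mk ↥A := mul_le_mul' hEle hEle
      _ = Cardinal.mk ↥A := Cardinal.mul_eq_self hAinfc
  calc Cardinal.mk ↥B ≤ Cardinal.mk ↥((Ioi '' E ∪ Iio '' E) ∪ image2 Ioo E E) + 1 :=
        Cardinal.mk_insert_le
    _ ≤ (Cardinal.mk ↥(Ioi '' E ∪ Iio '' E) + Cardinal.mk ↥(image2 Ioo E E)) + 1 :=
        add_le_add_left (Cardinal.mk_union_le _ _) _
    _ ≤ (Cardinal.mk ↥A + Cardinal.mk ↥A) + 1 := add_le_add (add_le_add hImg1 hImg2) le_rfl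
    _ = Cardinal.mk ↥A + 1 := by rw [Cardinal.add_eq_right hAinfc le_rfl]
    _ = Cardinal.mk ↥A := Cardinal.add_one_of_aleph0_le hAinfc

/-- Lower bound: any topological basis of `KA K A` has cardinality at least `#A`. -/
lemma KA_lower (K A : Set ℝ) (hAK : A ⊆ K) (B : Set (Set (KA K A)))
    (hB : TopologicalSpace.IsTopologicalBasis B) : Cardinal.mk A ≤ Cardinal.mk B := by
  have key : ∀ a : A, ∃ U : Set (KA K A), U ∈ B ∧
      (⟨toLex ((a : ℝ), true), hAK a.2, fun _ => a.2⟩ : KA K A) ∈ U ∧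
      ∀ y ∈ U, (⟨toLex ((a : ℝ), true), hAK a.2, fun _ => a.2⟩ : KA K A) ≤ y := by
    intro a
    set x0 : KA K A := ⟨toLex ((a : ℝ), false), hAK a.2, fun h => by simp at h⟩ with hx0
    set x1 : KA K A := ⟨toLex ((a : ℝ), true), hAK a.2, fun _ => a.2⟩ with hx1
    have h01 : x0 < x1 := by
      rw [KA_lt_iff]
      exact Or.inr ⟨rfl, Bool.false_lt_true⟩
    obtain ⟨U, hUB, hxU, hUsub⟩ := hB.exists_subset_of_mem_open (show x1 ∈ Ioi x0 from h01) isOpen_Ioi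
    refine ⟨U, hUB, hxU, fun y hy => ?_⟩
    have h0y : x0 < y := hUsub hy
    rw [KA_lt_iff] at h0y
    rw [KA_le_iff]
    rcases h0y with h | ⟨h1, h2⟩
    · exact Or.inl h
    · refine Or.inr ⟨h1, ?_⟩
      revert h2
      rcases (ofLex y.1).2 <;> simp
  choose f hfB hfmem hfmin using key
  have hinj : Function.Injective (fun a : A => (⟨f a, hfB a⟩ : B)) := by
    intro a b hab
    simp only [Subtype.mk.injEq] at hab
    have h1 := hfmin a _ (hab ▸ hfmem b)
    have h2 := hfmin b _ (hab.symm ▸ hfmem a)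
    have heq := le_antisymm h1 h2
    have := congrArg (fun z : KA K A => (ofLex z.1).1) heq
    simpa [Subtype.ext_iff] using this
  exact Cardinal.mk_le_of_injective hinj

theorem KA_weight (K A : Set ℝ)
    (hKsub : K ⊆ Set.Icc 0 1) (hKcl : IsClosed K) (hAK : A ⊆ K) (hAinf : A.Infinite) :
    weight (KA K A) = Cardinal.mk A := by
  obtain ⟨B₀, hB₀, hB₀le⟩ := KA_upper K A hAK hAinf
  have hB₀eq : Cardinal.mk B₀ = Cardinal.mk A :=
    le_antisymm hB₀le (KA_lower K A hAK B₀ hB₀)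
  refine le_antisymm (csInf_le' ⟨B₀, hB₀, hB₀eq⟩) (le_csInf ⟨_, B₀, hB₀, rfl⟩ ?_)
  rintro c ⟨B, hB, rfl⟩
  exact KA_lower K A hAK B hB
end

section
/- If A ⊆ (0,1) is dense in [0,1], then the space I_A = ([0,1] × {0}) ∪ (A × {1}), with the order topology from the lexicographic order, is totally disconnected (zero-dimensional). -/
open Set

namespace IAproof

variable {A : Set ℝ}

/-- Iic of (a, false) is clopen whenever `a ∈ [0,1] ∩ A`. -/
lemma isClopen_Iic_pa (a : ℝ) (haI : a ∈ Set.Icc (0:ℝ) 1) (haA : a ∈ A) :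
    IsClopen (Set.Iic (⟨toLex (a, false), ⟨haI, by simp⟩⟩ : KA (Set.Icc 0 1) A)) := by
  constructor
  · exact isClosed_Iic
  · have key : Set.Iic (⟨toLex (a, false), ⟨haI, by simp⟩⟩ : KA (Set.Icc 0 1) A)
        = Set.Iio (⟨toLex (a, true), ⟨haI, fun _ => haA⟩⟩ : KA (Set.Icc 0 1) A) := by
      ext z
      obtain ⟨⟨s, i⟩, hz⟩ := z
      simp only [Set.mem_Iic, Set.mem_Iio, Subtype.mk_le_mk, Subtype.mk_lt_mk]
      show toLex (s, i) ≤ toLex (a, false) ↔ toLex (s, i) < toLex (a, true)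
      rw [Prod.Lex.toLex_le_toLex, Prod.Lex.toLex_lt_toLex]
      constructor
      · rintro (h | ⟨h1, h2⟩)
        · exact Or.inl h
        · right
          exact ⟨h1, by revert h2; cases i <;> simp⟩
      · rintro (h | ⟨h1, h2⟩)
        · exact Or.inl h
        · right
          exact ⟨h1, by revert h2; cases i <;> simp⟩
    rw [key]
    exact isOpen_Iio

lemma separated (hA : A ⊆ Set.Ioo 0 1) (hdense : Set.Icc (0:ℝ) 1 ⊆ closure A)
    (x y : KA (Set.Icc 0 1) A) (hxy : x < y) :
    ∃ U : Set (KA (Set.Icc 0 1) A), IsClopen U ∧ x ∈ U ∧ y ∉ U := by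
  obtain ⟨⟨s, i⟩, hs, hsA⟩ := x
  obtain ⟨⟨t, j⟩, ht, htA⟩ := y
  rename' hxy => hlt
  have hs' : s ∈ Set.Icc (0:ℝ) 1 := hs
  have ht' : t ∈ Set.Icc (0:ℝ) 1 := ht
  have htA' : j = true → t ∈ A := htA
  change toLex (s, i) < toLex (t, j) at hlt
  rw [Prod.Lex.toLex_lt_toLex] at hlt
  rcases hlt with hlt | ⟨heq, hij⟩
  · -- s < t : pick a ∈ A ∩ (s, t)
    have hm : (s + t) / 2 ∈ Set.Icc (0:ℝ) 1 := ⟨by linarith [hs'.1, ht'.1], by linarith [hs'.2, ht'.2]⟩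
    have hmem := hdense hm
    rw [_root_.mem_closure_iff] at hmem
    obtain ⟨a, haIoo, haA⟩ := hmem (Set.Ioo s t) isOpen_Ioo ⟨by linarith, by linarith⟩
    have haI : a ∈ Set.Icc (0:ℝ) 1 := Set.Ioo_subset_Icc_self (hA haA)
    refine ⟨_, isClopen_Iic_pa a haI haA, ?_, ?_⟩
    · show (⟨toLex (s, i), hs, hsA⟩ : KA _ _) ≤ ⟨toLex (a, false), haI, by simp⟩
      rw [Subtype.mk_le_mk, Prod.Lex.le_iff]
      exact Or.inl haIoo.1
    · show ¬ (⟨toLex (t, j), ht, htA⟩ : KA _ _) ≤ ⟨toLex (a, false), haI, by simp⟩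
      rw [Subtype.mk_le_mk, Prod.Lex.le_iff]
      push_neg
      refine ⟨by simpa using haIoo.2.le, fun h => absurd h (by simp [ne_of_gt haIoo.2])⟩
  · -- s = t, i < j : so i = false, j = true, t ∈ A
    subst heq
    rw [Bool.lt_iff] at hij
    obtain ⟨hi, hj⟩ := hij
    subst hi; subst hj
    have hsAmem : s ∈ A := htA' rfl
    refine ⟨_, isClopen_Iic_pa s hs hsAmem, Set.mem_Iic.mpr le_rfl, ?_⟩
    show ¬ (⟨toLex (s, true), ht, htA⟩ : KA _ _) ≤ ⟨toLex (s, false), hs', by simp⟩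
    rw [Subtype.mk_le_mk, Prod.Lex.le_iff]
    push_neg
    exact ⟨le_refl s, fun _ => by simp⟩

end IAproof

theorem IA_totallyDisconnected (A : Set ℝ) (hA : A ⊆ Set.Ioo 0 1)
    (hdense : Set.Icc (0:ℝ) 1 ⊆ closure A) :
    TotallyDisconnectedSpace (KA (Set.Icc 0 1) A) := by
  refine ⟨isTotallyDisconnected_of_isTotallySeparated
    (totallySeparatedSpace_iff_exists_isClopen.mpr fun x y hxy => ?_).isTotallySeparated_univ⟩
  rcases lt_or_gt_of_ne hxy with h | h
  · exact IAproof.separated hA hdense x y h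
  · obtain ⟨U, hU, hyU, hxU⟩ := IAproof.separated hA hdense y x h
    exact ⟨Uᶜ, hU.compl, hxU, by simpa using hyU⟩
end

section
/- Let K be a compact Hausdorff space containing a nontrivial convergent sequence (a convergent injective sequence). Then the Banach space C(K) of continuous real-valued functions with the supremum norm is isomorphic (as a topological vector space / via a continuous linear equivalence) to any of its closed hyperplanes; in particular C(K) is isomorphic to the closed hyperplane {f ∈ C(K) : f(x₀) = 0} for any point x₀ ∈ K. -/
open Filter Set Topology

section topo
variable {K : Type*} [TopologicalSpace K] [CompactSpace K] [T2Space K]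
  {x : ℕ → K} {p : K}

lemma step_lemma (hconv : Filter.Tendsto x Filter.atTop (nhds p)) (hne : ∀ n, x n ≠ p)
    (m : ℕ) (W : Set K) (hW : IsOpen W) (hp : p ∈ W) :
    ∃ q : ℕ × Set K × Set K, m < q.1 ∧ IsOpen q.2.1 ∧ x q.1 ∈ q.2.1 ∧ q.2.1 ⊆ W ∧
      IsOpen q.2.2 ∧ p ∈ q.2.2 ∧ q.2.2 ⊆ W ∧ Disjoint q.2.1 q.2.2 := by
  obtain ⟨k, hk1, hk2⟩ := ((hconv.eventually (hW.mem_nhds hp)).and (eventually_gt_atTop m)).exists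
  obtain ⟨U1, U2, hU1, hU2, hx1, hp2, hd⟩ := t2_separation (hne k)
  exact ⟨⟨k, U1 ∩ W, U2 ∩ W⟩, hk2, hU1.inter hW, ⟨hx1, hk1⟩, inter_subset_right,
    hU2.inter hW, ⟨hp2, hp⟩, inter_subset_right,
    hd.mono inter_subset_left inter_subset_left⟩

lemma exists_disjoint_opens (hconv : Filter.Tendsto x Filter.atTop (nhds p))
    (hne : ∀ n, x n ≠ p) :
    ∃ (k : ℕ → ℕ) (V : ℕ → Set K), StrictMono k ∧ (∀ n, IsOpen (V n)) ∧
      (∀ n, x (k n) ∈ V n) ∧ Pairwise (Function.onFun Disjoint V) := by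
  choose f h1 h2 h3 h4 h5 h6 h7 h8 using step_lemma hconv hne
  let st : ℕ → {q : ℕ × Set K × Set K // IsOpen q.2.2 ∧ p ∈ q.2.2} := fun n =>
    Nat.rec ⟨f 0 univ isOpen_univ (mem_univ p), h5 _ _ _ _, h6 _ _ _ _⟩
      (fun _ prev => ⟨f prev.1.1 prev.1.2.2 prev.2.1 prev.2.2, h5 _ _ _ _, h6 _ _ _ _⟩) n
  let k : ℕ → ℕ := fun n => (st n).1.1
  let V : ℕ → Set K := fun n => (st n).1.2.1
  let W : ℕ → Set K := fun n => (st n).1.2.2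
  have hstep : ∀ n, st (n + 1) =
      ⟨f (st n).1.1 (st n).1.2.2 (st n).2.1 (st n).2.2, h5 _ _ _ _, h6 _ _ _ _⟩ := fun n => rfl
  have hmono : StrictMono k := by
    apply strictMono_nat_of_lt_succ
    intro n
    exact h1 (st n).1.1 (st n).1.2.2 (st n).2.1 (st n).2.2
  have hVopen : ∀ n, IsOpen (V n) := by
    intro n
    cases n with
    | zero => exact h2 0 univ isOpen_univ (mem_univ p)
    | succ m => exact h2 _ _ _ _
  have hVx : ∀ n, x (k n) ∈ V n := by
    intro n
    cases n with
    | zero => exact h3 0 univ isOpen_univ (mem_univ p)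
    | succ m => exact h3 _ _ _ _
  have hVW : ∀ n, Disjoint (V n) (W n) := by
    intro n
    cases n with
    | zero => exact h8 0 univ isOpen_univ (mem_univ p)
    | succ m => exact h8 _ _ _ _
  have hWs : ∀ n, W (n + 1) ⊆ W n := fun n => h7 _ _ _ _
  have hVs : ∀ n, V (n + 1) ⊆ W n := fun n => h4 _ _ _ _
  have hWmono : ∀ n m, n ≤ m → W m ⊆ W n := by
    intro n m h
    induction m with
    | zero => simp_all
    | succ j ih =>
      rcases Nat.lt_or_ge n (j+1) with hlt | hge
      · exact (hWs j).trans (ih (Nat.lt_succ_iff.mp hlt))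
      · have : n = j + 1 := le_antisymm h hge
        subst this; rfl
  refine ⟨k, V, hmono, hVopen, hVx, ?_⟩
  have key : ∀ n m, n < m → Disjoint (V n) (V m) := by
    intro n m h
    have : V m ⊆ W n := by
      obtain ⟨j, rfl⟩ := Nat.exists_eq_add_of_lt h
      calc V (n + j + 1) ⊆ W (n + j) := hVs _
        _ ⊆ W n := hWmono n (n+j) (Nat.le_add_right _ _)
    exact ((hVW n).mono_right this)
  intro n m hnm
  rcases lt_or_gt_of_ne hnm with h | h
  · exact key n m h
  · exact (key m n h).symm

end topo

section bumps
variable {K : Type*} [TopologicalSpace K] [CompactSpace K] [T2Space K]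
  {V : ℕ → Set K} {u : ℕ → C(K, ℝ)}

lemma bump_sum_norm_le (hdisj : Pairwise (Function.onFun Disjoint V))
    (hsupp : ∀ n, tsupport ⇑(u n) ⊆ V n) (hrange : ∀ n z, u n z ∈ Icc (0:ℝ) 1)
    (s : Finset ℕ) (c : ℕ → ℝ) {ε : ℝ} (hε : 0 ≤ ε) (h : ∀ n ∈ s, |c n| ≤ ε) :
    ‖∑ n ∈ s, c n • u n‖ ≤ ε := by
  rw [ContinuousMap.norm_le _ hε]
  intro z
  have hev : (∑ n ∈ s, c n • u n) z = ∑ n ∈ s, c n * u n z := by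
    simp [ContinuousMap.sum_apply]
  rw [hev, Real.norm_eq_abs]
  by_cases hex : ∃ m ∈ s, u m z ≠ 0
  · obtain ⟨m, hm, hmz⟩ := hex
    have hzV : z ∈ V m := hsupp m (subset_tsupport _ hmz)
    have hz0 : ∀ n ∈ s, n ≠ m → c n * u n z = 0 := by
      intro n _ hnm
      have : u n z = 0 := by
        by_contra hc
        exact (hdisj hnm).le_bot ⟨hsupp n (subset_tsupport _ hc), hzV⟩
      simp [this]
    rw [Finset.sum_eq_single_of_mem m hm hz0]
    have h1 : |u m z| ≤ 1 := by
      rw [abs_le]; exact ⟨by linarith [(hrange m z).1], (hrange m z).2⟩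
    calc |c m * u m z| = |c m| * |u m z| := abs_mul _ _
      _ ≤ ε * 1 := mul_le_mul (h m hm) h1 (abs_nonneg _) hε
      _ = ε := mul_one ε
  · push_neg at hex
    have : ∀ n ∈ s, c n * u n z = 0 := fun n hn => by simp [hex n hn]
    rw [Finset.sum_eq_zero this, abs_zero]; exact hε

lemma bump_summable (hdisj : Pairwise (Function.onFun Disjoint V))
    (hsupp : ∀ n, tsupport ⇑(u n) ⊆ V n) (hrange : ∀ n z, u n z ∈ Icc (0:ℝ) 1)
    (c : ℕ → ℝ) (hc : Tendsto c atTop (𝓝 0)) :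
    Summable (fun n => c n • u n) := by
  rw [summable_iff_vanishing_norm]
  intro ε hε
  obtain ⟨N, hN⟩ := (Metric.tendsto_atTop.mp hc (ε/2) (by linarith))
  refine ⟨Finset.range N, fun t ht => ?_⟩
  have hb : ∀ n ∈ t, |c n| ≤ ε/2 := by
    intro n hn
    have : N ≤ n := by
      by_contra hlt
      exact (Finset.disjoint_left.mp ht hn) (Finset.mem_range.mpr (by omega))
    simpa [Real.dist_eq] using (hN n this).le
  calc ‖∑ n ∈ t, c n • u n‖ ≤ ε/2 :=
        bump_sum_norm_le hdisj hsupp hrange t c (by linarith) hb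
    _ < ε := by linarith

lemma bump_tsum_norm_le (hdisj : Pairwise (Function.onFun Disjoint V))
    (hsupp : ∀ n, tsupport ⇑(u n) ⊆ V n) (hrange : ∀ n z, u n z ∈ Icc (0:ℝ) 1)
    (c : ℕ → ℝ) (hc : Tendsto c atTop (𝓝 0)) {B : ℝ} (hB : ∀ n, |c n| ≤ B) :
    ‖∑' n, c n • u n‖ ≤ B := by
  have hB0 : 0 ≤ B := le_trans (abs_nonneg _) (hB 0)
  have hsum := bump_summable hdisj hsupp hrange c hc
  have hlim : Tendsto (fun s : Finset ℕ => ‖∑ n ∈ s, c n • u n‖) atTop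
      (𝓝 ‖∑' n, c n • u n‖) := (continuous_norm.tendsto _).comp hsum.hasSum
  exact le_of_tendsto hlim (Eventually.of_forall fun s =>
    bump_sum_norm_le hdisj hsupp hrange s c hB0 (fun n _ => hB n))

lemma bump_tsum_apply (hdisj : Pairwise (Function.onFun Disjoint V))
    (hsupp : ∀ n, tsupport ⇑(u n) ⊆ V n) (hrange : ∀ n z, u n z ∈ Icc (0:ℝ) 1)
    {y : ℕ → K} (hyV : ∀ n, y n ∈ V n) (hu1 : ∀ n, u n (y n) = 1)
    (c : ℕ → ℝ) (hc : Tendsto c atTop (𝓝 0)) (m : ℕ) :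
    (∑' n, c n • u n) (y m) = c m := by
  have hsum := bump_summable hdisj hsupp hrange c hc
  have := (ContinuousMap.evalCLM ℝ (y m)).map_tsum hsum
  have hev : (∑' n, c n • u n) (y m) = ∑' n, c n * u n (y m) := by
    simpa [ContinuousMap.evalCLM] using this
  rw [hev]
  rw [tsum_eq_single m]
  · rw [hu1 m, mul_one]
  · intro n hnm
    have : u n (y m) = 0 := by
      by_contra hcon
      exact (hdisj hnm).le_bot ⟨hsupp n (subset_tsupport _ hcon), hyV m⟩
    simp [this]

end bumps

section prodequiv
variable {K : Type*} [TopologicalSpace K] [CompactSpace K] [T2Space K]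

lemma abs_sub_le_abs_add_abs' (a b : ℝ) : |a - b| ≤ |a| + |b| := by
  calc |a - b| = |a + (-b)| := by rw [sub_eq_add_neg]
    _ ≤ |a| + |(-b)| := abs_add_le _ _
    _ = |a| + |b| := by rw [abs_neg]

lemma prod_equiv {V : ℕ → Set K} {u : ℕ → C(K, ℝ)} {y : ℕ → K} {p : K}
    (hdisj : Pairwise (Function.onFun Disjoint V))
    (hsupp : ∀ n, tsupport ⇑(u n) ⊆ V n) (hrange : ∀ n z, u n z ∈ Icc (0:ℝ) 1)
    (hyV : ∀ n, y n ∈ V n) (hu1 : ∀ n, u n (y n) = 1)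
    (hy : Tendsto y atTop (𝓝 p)) :
    Nonempty ((ℝ × C(K, ℝ)) ≃L[ℝ] C(K, ℝ)) := by
  classical
  have hfy : ∀ f : C(K, ℝ), Tendsto (fun n => f (y n)) atTop (𝓝 (f p)) :=
    fun f => (f.continuous.tendsto p).comp hy
  -- coefficients for the forward map
  let coef : ℝ × C(K, ℝ) → ℕ → ℝ := fun q n =>
    Nat.casesOn n (q.1 - q.2 (y 0)) (fun m => q.2 (y m) - q.2 (y (m+1)))
  have hcoef0 : ∀ q, Tendsto (coef q) atTop (𝓝 0) := by
    intro q
    rw [← tendsto_add_atTop_iff_nat 1]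
    have heq : (fun n => coef q (n + 1)) = fun n => q.2 (y n) - q.2 (y (n+1)) := rfl
    rw [heq]
    have := (hfy q.2).sub ((hfy q.2).comp (tendsto_add_atTop_nat 1))
    simpa using this
  have hcoefB : ∀ q n, |coef q n| ≤ |q.1| + 2 * ‖q.2‖ := by
    intro q n
    have hn2 : ∀ m, |q.2 (y m)| ≤ ‖q.2‖ := fun m => by
      simpa [Real.norm_eq_abs] using ContinuousMap.norm_coe_le_norm q.2 (y m)
    cases n with
    | zero =>
      calc |coef q 0| = |q.1 - q.2 (y 0)| := rfl
        _ ≤ |q.1| + |q.2 (y 0)| := abs_sub_le_abs_add_abs' _ _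
        _ ≤ |q.1| + 2 * ‖q.2‖ := by nlinarith [hn2 0, norm_nonneg q.2]
    | succ m =>
      calc |coef q (m+1)| = |q.2 (y m) - q.2 (y (m+1))| := rfl
        _ ≤ |q.2 (y m)| + |q.2 (y (m+1))| := abs_sub_le_abs_add_abs' _ _
        _ ≤ |q.1| + 2 * ‖q.2‖ := by nlinarith [hn2 m, hn2 (m+1), abs_nonneg q.1]
  have hsumA : ∀ q, Summable (fun n => coef q n • u n) :=
    fun q => bump_summable hdisj hsupp hrange _ (hcoef0 q)
  let S : ℝ × C(K, ℝ) → C(K, ℝ) := fun q => ∑' n, coef q n • u n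
  let Afun : ℝ × C(K, ℝ) → C(K, ℝ) := fun q => q.2 + S q
  -- coefficients for the backward map
  let dcoef : C(K, ℝ) → ℕ → ℝ := fun g n => g (y (n+1)) - g (y n)
  have hdcoef0 : ∀ g, Tendsto (dcoef g) atTop (𝓝 0) := by
    intro g
    have := ((hfy g).comp (tendsto_add_atTop_nat 1)).sub (hfy g)
    simpa using this
  have hdcoefB : ∀ g n, |dcoef g n| ≤ 2 * ‖g‖ := by
    intro g n
    have hn2 : ∀ m, |g (y m)| ≤ ‖g‖ := fun m => by
      simpa [Real.norm_eq_abs] using ContinuousMap.norm_coe_le_norm g (y m)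
    calc |dcoef g n| ≤ |g (y (n+1))| + |g (y n)| := abs_sub_le_abs_add_abs' _ _
      _ ≤ 2 * ‖g‖ := by nlinarith [hn2 n, hn2 (n+1)]
  have hsumB : ∀ g, Summable (fun n => dcoef g n • u n) :=
    fun g => bump_summable hdisj hsupp hrange _ (hdcoef0 g)
  let T : C(K, ℝ) → C(K, ℝ) := fun g => ∑' n, dcoef g n • u n
  let Bfun : C(K, ℝ) → ℝ × C(K, ℝ) := fun g => (g (y 0), g + T g)
  -- linearity of coefficients
  have hcoef_add : ∀ q q', coef (q + q') = fun n => coef q n + coef q' n := by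
    intro q q'
    funext n
    cases n with
    | zero => show (q + q').1 - (q + q').2 (y 0) = _; simp [coef]; ring
    | succ m => show (q + q').2 (y m) - (q + q').2 (y (m+1)) = _; simp [coef]; ring
  have hcoef_smul : ∀ (r : ℝ) q, coef (r • q) = fun n => r * coef q n := by
    intro r q
    funext n
    cases n with
    | zero => show (r • q).1 - (r • q).2 (y 0) = _; simp [coef]; ring
    | succ m => show (r • q).2 (y m) - (r • q).2 (y (m+1)) = _; simp [coef]; ring
  have hS_add : ∀ q q', S (q + q') = S q + S q' := by
    intro q q'
    show ∑' n, coef (q + q') n • u n = _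
    rw [hcoef_add q q']
    rw [tsum_congr (fun n => add_smul (coef q n) (coef q' n) (u n))]
    exact Summable.tsum_add (hsumA q) (hsumA q')
  have hS_smul : ∀ (r : ℝ) q, S (r • q) = r • S q := by
    intro r q
    show ∑' n, coef (r • q) n • u n = _
    rw [hcoef_smul r q]
    rw [tsum_congr (fun n => mul_smul r (coef q n) (u n))]
    exact Summable.tsum_const_smul r (hsumA q)
  have hdcoef_add : ∀ g g', dcoef (g + g') = fun n => dcoef g n + dcoef g' n := by
    intro g g'; funext n; show (g + g') (y (n+1)) - (g + g') (y n) = _; simp [dcoef]; ring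
  have hdcoef_smul : ∀ (r : ℝ) g, dcoef (r • g) = fun n => r * dcoef g n := by
    intro r g; funext n; show (r • g) (y (n+1)) - (r • g) (y n) = _; simp [dcoef]; ring
  have hT_add : ∀ g g', T (g + g') = T g + T g' := by
    intro g g'
    show ∑' n, dcoef (g + g') n • u n = _
    rw [hdcoef_add g g']
    rw [tsum_congr (fun n => add_smul (dcoef g n) (dcoef g' n) (u n))]
    exact Summable.tsum_add (hsumB g) (hsumB g')
  have hT_smul : ∀ (r : ℝ) g, T (r • g) = r • T g := by
    intro r g
    show ∑' n, dcoef (r • g) n • u n = _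
    rw [hdcoef_smul r g]
    rw [tsum_congr (fun n => mul_smul r (dcoef g n) (u n))]
    exact Summable.tsum_const_smul r (hsumB g)
  -- the linear maps
  let A : (ℝ × C(K, ℝ)) →ₗ[ℝ] C(K, ℝ) :=
    { toFun := Afun
      map_add' := fun q q' => by
        show (q + q').2 + S (q + q') = (q.2 + S q) + (q'.2 + S q')
        rw [hS_add, Prod.snd_add]; abel
      map_smul' := fun r q => by
        show (r • q).2 + S (r • q) = r • (q.2 + S q)
        rw [hS_smul, Prod.smul_snd, smul_add] }
  let B : C(K, ℝ) →ₗ[ℝ] (ℝ × C(K, ℝ)) :=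
    { toFun := Bfun
      map_add' := fun g g' => by
        show (_, (g + g') + T (g + g')) = _
        rw [hT_add]
        refine Prod.ext ?_ ?_
        · simp [Bfun]
        · show (g + g') + (T g + T g') = (g + T g) + (g' + T g')
          abel
      map_smul' := fun r g => by
        show (_, (r • g) + T (r • g)) = _
        rw [hT_smul]
        refine Prod.ext ?_ ?_
        · simp [Bfun]
        · show (r • g) + r • T g = r • (g + T g)
          rw [smul_add] }
  -- continuity
  have hSnorm : ∀ q, ‖S q‖ ≤ |q.1| + 2 * ‖q.2‖ :=
    fun q => bump_tsum_norm_le hdisj hsupp hrange _ (hcoef0 q) (hcoefB q)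
  have hTnorm : ∀ g, ‖T g‖ ≤ 2 * ‖g‖ :=
    fun g => bump_tsum_norm_le hdisj hsupp hrange _ (hdcoef0 g) (hdcoefB g)
  let A' : (ℝ × C(K, ℝ)) →L[ℝ] C(K, ℝ) := LinearMap.mkContinuous A 4 (by
    intro q
    have h1 : |q.1| ≤ ‖q‖ := by
      simpa [Real.norm_eq_abs] using norm_fst_le q
    have h2 : ‖q.2‖ ≤ ‖q‖ := norm_snd_le q
    calc ‖Afun q‖ ≤ ‖q.2‖ + ‖S q‖ := norm_add_le _ _
      _ ≤ ‖q.2‖ + (|q.1| + 2 * ‖q.2‖) := by linarith [hSnorm q]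
      _ ≤ 4 * ‖q‖ := by linarith)
  let B' : C(K, ℝ) →L[ℝ] (ℝ × C(K, ℝ)) := LinearMap.mkContinuous B 3 (by
    intro g
    have h1 : |g (y 0)| ≤ ‖g‖ := by
      simpa [Real.norm_eq_abs] using ContinuousMap.norm_coe_le_norm g (y 0)
    have h2 : ‖g + T g‖ ≤ 3 * ‖g‖ := by
      calc ‖g + T g‖ ≤ ‖g‖ + ‖T g‖ := norm_add_le _ _
        _ ≤ 3 * ‖g‖ := by linarith [hTnorm g]
    have h3 : ‖g (y 0)‖ ≤ 3 * ‖g‖ := by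
      rw [Real.norm_eq_abs]; nlinarith [norm_nonneg g]
    calc ‖Bfun g‖ = max ‖g (y 0)‖ ‖g + T g‖ := rfl
      _ ≤ 3 * ‖g‖ := max_le h3 h2)
  -- evaluation formulas
  have hSpt : ∀ q m, S q (y m) = coef q m :=
    fun q m => bump_tsum_apply hdisj hsupp hrange hyV hu1 _ (hcoef0 q) m
  have hTpt : ∀ g m, T g (y m) = dcoef g m :=
    fun g m => bump_tsum_apply hdisj hsupp hrange hyV hu1 _ (hdcoef0 g) m
  have hApt : ∀ q m, Afun q (y m) = q.2 (y m) + coef q m := by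
    intro q m
    show (q.2 + S q) (y m) = _
    rw [ContinuousMap.add_apply, hSpt]
  -- left inverse : B (A q) = q
  have hleft : ∀ q, Bfun (Afun q) = q := by
    intro q
    have hd : dcoef (Afun q) = fun n => -(coef q n) := by
      funext n
      show Afun q (y (n+1)) - Afun q (y n) = _
      rw [hApt, hApt]
      have : coef q (n+1) = q.2 (y n) - q.2 (y (n+1)) := rfl
      rw [this]
      ring
    have hT : T (Afun q) = -(S q) := by
      show ∑' n, dcoef (Afun q) n • u n = _
      rw [hd]
      rw [tsum_congr (fun n => neg_smul (coef q n) (u n))]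
      exact tsum_neg
    refine Prod.ext ?_ ?_
    · show Afun q (y 0) = q.1
      rw [hApt]
      show q.2 (y 0) + (q.1 - q.2 (y 0)) = q.1
      ring
    · show Afun q + T (Afun q) = q.2
      rw [hT]
      show (q.2 + S q) + -(S q) = q.2
      abel
  -- right inverse : A (B g) = g
  have hright : ∀ g, Afun (Bfun g) = g := by
    intro g
    have hh : ∀ m, (g + T g) (y m) = g (y (m+1)) := by
      intro m
      rw [ContinuousMap.add_apply, hTpt]
      show g (y m) + (g (y (m+1)) - g (y m)) = _
      ring
    have hc : coef (Bfun g) = fun n => -(dcoef g n) := by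
      funext n
      cases n with
      | zero =>
        show g (y 0) - (g + T g) (y 0) = -(g (y 1) - g (y 0))
        rw [hh]; ring
      | succ m =>
        show (g + T g) (y m) - (g + T g) (y (m+1)) = -(g (y (m+2)) - g (y (m+1)))
        rw [hh, hh]; ring
    have hS' : S (Bfun g) = -(T g) := by
      show ∑' n, coef (Bfun g) n • u n = _
      rw [hc]
      rw [tsum_congr (fun n => neg_smul (dcoef g n) (u n))]
      exact tsum_neg
    show (Bfun g).2 + S (Bfun g) = g
    rw [hS']
    show (g + T g) + -(T g) = g
    abel
  exact ⟨ContinuousLinearEquiv.equivOfInverse A' B'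
    (fun q => by
      show B (A q) = q
      exact hleft q)
    (fun g => by
      show A (B g) = g
      exact hright g)⟩

end prodequiv

section hyper
variable {E F : Type*} [NormedAddCommGroup E] [NormedSpace ℝ E]
  [NormedAddCommGroup F] [NormedSpace ℝ F]

/-- transport kernel along an equivalence -/
lemma ker_comp_equiv (e : E ≃L[ℝ] F) (ψ : F →L[ℝ] ℝ) :
    Nonempty (LinearMap.ker ((ψ.comp (e : E →L[ℝ] F) : E →ₗ[ℝ] ℝ)) ≃L[ℝ] LinearMap.ker (ψ : F →ₗ[ℝ] ℝ)) := by
  let fwd : LinearMap.ker ((ψ.comp (e : E →L[ℝ] F) : E →ₗ[ℝ] ℝ)) →L[ℝ] LinearMap.ker (ψ : F →ₗ[ℝ] ℝ) :=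
    (((e : E →L[ℝ] F)).comp (Submodule.subtypeL _)).codRestrict _ (fun z => by
      have hz := z.2
      simp only [LinearMap.mem_ker, ContinuousLinearMap.coe_comp', Function.comp_apply,
        ContinuousLinearMap.coe_coe, Submodule.coe_subtypeL', Submodule.coe_subtype] at *
      exact hz)
  let bwd : LinearMap.ker (ψ : F →ₗ[ℝ] ℝ) →L[ℝ] LinearMap.ker ((ψ.comp (e : E →L[ℝ] F) : E →ₗ[ℝ] ℝ)) :=
    (((e.symm : F →L[ℝ] E)).comp (Submodule.subtypeL _)).codRestrict _ (fun w => by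
      have hw := w.2
      simp only [LinearMap.mem_ker, ContinuousLinearMap.coe_comp', Function.comp_apply,
        ContinuousLinearMap.coe_coe, Submodule.coe_subtypeL', Submodule.coe_subtype] at *
      simpa [e.apply_symm_apply] using hw)
  refine ⟨ContinuousLinearEquiv.equivOfInverse fwd bwd ?_ ?_⟩
  · intro z
    apply Subtype.ext
    show e.symm (e (z : E)) = z; simp
  · intro w
    apply Subtype.ext
    show e (e.symm (w : F)) = w; simp

lemma ker_eq_of_le {φ ψ : E →L[ℝ] ℝ} (hφ : φ ≠ 0) (hψ : ψ ≠ 0)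
    (h : LinearMap.ker (φ : E →ₗ[ℝ] ℝ) ≤ LinearMap.ker (ψ : E →ₗ[ℝ] ℝ)) : LinearMap.ker (φ : E →ₗ[ℝ] ℝ) = LinearMap.ker (ψ : E →ₗ[ℝ] ℝ) := by
  obtain ⟨w, hw⟩ : ∃ w, φ w ≠ 0 := by
    by_contra hcon
    push_neg at hcon
    exact hφ (by ext z; simp [hcon])
  have hker : ∀ z : E, z - (φ z / φ w) • w ∈ LinearMap.ker (φ : E →ₗ[ℝ] ℝ) := by
    intro z
    simp only [LinearMap.mem_ker, ContinuousLinearMap.coe_coe, map_sub, map_smul, smul_eq_mul]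
    field_simp
    ring
  have hψw : ψ w ≠ 0 := by
    intro hw0
    apply hψ
    ext z
    have := h (hker z)
    simp only [LinearMap.mem_ker, ContinuousLinearMap.coe_coe, map_sub, map_smul, smul_eq_mul, hw0, mul_zero,
      sub_zero] at this
    simpa using this
  refine le_antisymm h ?_
  intro z hz
  have hmem := h (hker z)
  simp only [LinearMap.mem_ker, ContinuousLinearMap.coe_coe, map_sub, map_smul, smul_eq_mul] at hmem hz ⊢
  rw [hz, zero_sub, neg_eq_zero, mul_eq_zero] at hmem
  rcases hmem with h1 | h1
  · rcases div_eq_zero_iff.mp h1 with h2 | h2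
    · exact h2
    · exact absurd h2 hw
  · exact absurd h1 hψw

set_option maxHeartbeats 1000000 in
lemma ker_equiv_ker (φ ψ : E →L[ℝ] ℝ) (hφ : φ ≠ 0) (hψ : ψ ≠ 0) :
    Nonempty (LinearMap.ker (φ : E →ₗ[ℝ] ℝ) ≃L[ℝ] LinearMap.ker (ψ : E →ₗ[ℝ] ℝ)) := by
  by_cases heq : LinearMap.ker (φ : E →ₗ[ℝ] ℝ) = LinearMap.ker (ψ : E →ₗ[ℝ] ℝ)
  · let f1 : LinearMap.ker (φ : E →ₗ[ℝ] ℝ) →L[ℝ] LinearMap.ker (ψ : E →ₗ[ℝ] ℝ) :=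
      (Submodule.subtypeL _).codRestrict _ (fun z => heq ▸ z.2)
    let f2 : LinearMap.ker (ψ : E →ₗ[ℝ] ℝ) →L[ℝ] LinearMap.ker (φ : E →ₗ[ℝ] ℝ) :=
      (Submodule.subtypeL _).codRestrict _ (fun z => heq.symm ▸ z.2)
    exact ⟨ContinuousLinearEquiv.equivOfInverse f1 f2
      (fun z => Subtype.ext (by simp [f1, f2])) (fun z => Subtype.ext (by simp [f1, f2]))⟩
  · have h1 : ¬ LinearMap.ker (φ : E →ₗ[ℝ] ℝ) ≤ LinearMap.ker (ψ : E →ₗ[ℝ] ℝ) := fun h => heq (ker_eq_of_le hφ hψ h)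
    have h2 : ¬ LinearMap.ker (ψ : E →ₗ[ℝ] ℝ) ≤ LinearMap.ker (φ : E →ₗ[ℝ] ℝ) := fun h => heq (ker_eq_of_le hψ hφ h).symm
    obtain ⟨u, hu1, hu2⟩ := SetLike.not_le_iff_exists.mp h1
    obtain ⟨v, hv1, hv2⟩ := SetLike.not_le_iff_exists.mp h2
    have hφu : φ u = 0 := hu1
    have hψv : ψ v = 0 := hv1
    have hψu : ψ u ≠ 0 := fun h => hu2 (LinearMap.mem_ker.mpr h)
    have hφv : φ v ≠ 0 := fun h => hv2 (LinearMap.mem_ker.mpr h)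
    let M1 : LinearMap.ker (φ : E →ₗ[ℝ] ℝ) →L[ℝ] E :=
      Submodule.subtypeL _ + (ψ.comp (Submodule.subtypeL _)).smulRight ((ψ u)⁻¹ • (v - u))
    have hM1app : ∀ h : LinearMap.ker (φ : E →ₗ[ℝ] ℝ), M1 h = (h : E) + (ψ (h : E) * (ψ u)⁻¹) • (v - u) := by
      intro h
      simp [M1, ContinuousLinearMap.smulRight_apply, smul_smul]
    have hM1 : ∀ h : LinearMap.ker (φ : E →ₗ[ℝ] ℝ), M1 h ∈ LinearMap.ker (ψ : E →ₗ[ℝ] ℝ) := by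
      intro h
      rw [LinearMap.mem_ker, hM1app]
      simp only [ContinuousLinearMap.coe_coe, map_add, map_smul, map_sub, hψv, smul_eq_mul]
      field_simp
      ring
    let M2 : LinearMap.ker (ψ : E →ₗ[ℝ] ℝ) →L[ℝ] E :=
      Submodule.subtypeL _ + (φ.comp (Submodule.subtypeL _)).smulRight ((φ v)⁻¹ • (u - v))
    have hM2app : ∀ k : LinearMap.ker (ψ : E →ₗ[ℝ] ℝ), M2 k = (k : E) + (φ (k : E) * (φ v)⁻¹) • (u - v) := by
      intro k
      simp [M2, ContinuousLinearMap.smulRight_apply, smul_smul]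
    have hM2 : ∀ k : LinearMap.ker (ψ : E →ₗ[ℝ] ℝ), M2 k ∈ LinearMap.ker (φ : E →ₗ[ℝ] ℝ) := by
      intro k
      rw [LinearMap.mem_ker, hM2app]
      simp only [ContinuousLinearMap.coe_coe, map_add, map_smul, map_sub, hφu, smul_eq_mul]
      field_simp
      ring
    let T : LinearMap.ker (φ : E →ₗ[ℝ] ℝ) →L[ℝ] LinearMap.ker (ψ : E →ₗ[ℝ] ℝ) := M1.codRestrict _ hM1
    let Sm : LinearMap.ker (ψ : E →ₗ[ℝ] ℝ) →L[ℝ] LinearMap.ker (φ : E →ₗ[ℝ] ℝ) := M2.codRestrict _ hM2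
    refine ⟨ContinuousLinearEquiv.equivOfInverse T Sm ?_ ?_⟩
    · intro h
      apply Subtype.ext
      have hφh : φ (h : E) = 0 := h.2
      show M2 ⟨M1 h, hM1 h⟩ = (h : E)
      rw [hM2app]
      show M1 h + (φ (M1 h) * (φ v)⁻¹) • (u - v) = (h : E)
      rw [hM1app]
      simp only [map_add, map_smul, map_sub, hφu, hφh, smul_eq_mul]
      match_scalars <;> field_simp <;> ring
    · intro k
      apply Subtype.ext
      have hψk : ψ (k : E) = 0 := k.2
      show M1 ⟨M2 k, hM2 k⟩ = (k : E)
      rw [hM1app]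
      show M2 k + (ψ (M2 k) * (ψ u)⁻¹) • (v - u) = (k : E)
      rw [hM2app]
      simp only [map_add, map_smul, map_sub, hψv, hψk, smul_eq_mul]
      match_scalars <;> field_simp <;> ring

lemma ker_fst_equiv : Nonempty
    (LinearMap.ker ((ContinuousLinearMap.fst ℝ ℝ E : ℝ × E →ₗ[ℝ] ℝ)) ≃L[ℝ] E) := by
  let fwd : LinearMap.ker ((ContinuousLinearMap.fst ℝ ℝ E : ℝ × E →ₗ[ℝ] ℝ)) →L[ℝ] E :=
    (ContinuousLinearMap.snd ℝ ℝ E).comp (Submodule.subtypeL _)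
  let bwd : E →L[ℝ] LinearMap.ker ((ContinuousLinearMap.fst ℝ ℝ E : ℝ × E →ₗ[ℝ] ℝ)) :=
    (ContinuousLinearMap.inr ℝ ℝ E).codRestrict _ (fun f => by
      simp [LinearMap.mem_ker])
  refine ⟨ContinuousLinearEquiv.equivOfInverse fwd bwd ?_ ?_⟩
  · intro z
    apply Subtype.ext
    have hz : (z : ℝ × E).1 = 0 := z.2
    refine Prod.ext ?_ ?_
    · show (0:ℝ) = (z : ℝ × E).1; exact hz.symm
    · rfl
  · intro f
    rfl

end hyper


theorem CK_iso_hyperplanes_of_convergent_sequence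
    (K : Type*) [TopologicalSpace K] [CompactSpace K] [T2Space K]
    (x : ℕ → K) (p : K) (hinj : Function.Injective x)
    (hconv : Filter.Tendsto x Filter.atTop (nhds p)) (hne : ∀ n, x n ≠ p) :
    (∀ φ : C(K, ℝ) →L[ℝ] ℝ, φ ≠ 0 →
      Nonempty (C(K, ℝ) ≃L[ℝ] LinearMap.ker (φ : C(K, ℝ) →ₗ[ℝ] ℝ))) ∧
    (∀ x₀ : K,
      Nonempty (C(K, ℝ) ≃L[ℝ] LinearMap.ker ((ContinuousMap.evalCLM ℝ x₀ : C(K, ℝ) →L[ℝ] ℝ) : C(K, ℝ) →ₗ[ℝ] ℝ))) := by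
  obtain ⟨k, V, hk, hVopen, hVx, hVdisj⟩ := exists_disjoint_opens hconv hne
  set y : ℕ → K := fun n => x (k n) with hy_def
  have hy : Filter.Tendsto y Filter.atTop (nhds p) := hconv.comp hk.tendsto_atTop
  have hbump : ∀ n, ∃ f : C(K, ℝ), tsupport ⇑f ⊆ V n ∧ Set.EqOn ⇑f 1 {y n} ∧
      ∀ z, f z ∈ Set.Icc (0:ℝ) 1 := fun n =>
    exists_tsupport_one_of_isOpen_isClosed (hVopen n) isClosed_closure.isCompact
      isClosed_singleton (Set.singleton_subset_iff.mpr (hVx n))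
  choose u hsupp hone hrange using hbump
  have hu1 : ∀ n, u n (y n) = 1 := fun n => hone n (Set.mem_singleton _)
  obtain ⟨e⟩ := prod_equiv hVdisj hsupp hrange hVx hu1 hy
  have main : ∀ φ : C(K, ℝ) →L[ℝ] ℝ, φ ≠ 0 →
      Nonempty (C(K, ℝ) ≃L[ℝ] LinearMap.ker (φ : C(K, ℝ) →ₗ[ℝ] ℝ)) := by
    intro φ hφ
    have hfst : (ContinuousLinearMap.fst ℝ ℝ C(K, ℝ)) ≠ 0 := by
      intro h
      have h1 : (ContinuousLinearMap.fst ℝ ℝ C(K, ℝ)) ((1 : ℝ), (0 : C(K, ℝ))) = 1 := rfl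
      rw [h] at h1
      simpa using h1
    have hφe : φ.comp (e : (ℝ × C(K, ℝ)) →L[ℝ] C(K, ℝ)) ≠ 0 := by
      intro h0
      apply hφ
      ext f
      have h1 := DFunLike.congr_fun h0 (e.symm f)
      simpa using h1
    obtain ⟨e1⟩ := ker_fst_equiv (E := C(K, ℝ))
    obtain ⟨e2⟩ := ker_equiv_ker (ContinuousLinearMap.fst ℝ ℝ C(K, ℝ))
      (φ.comp (e : (ℝ × C(K, ℝ)) →L[ℝ] C(K, ℝ))) hfst hφe
    obtain ⟨e3⟩ := ker_comp_equiv e φ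
    exact ⟨e1.symm.trans (e2.trans e3)⟩
  refine ⟨main, fun x₀ => main _ ?_⟩
  intro h
  have h1 := DFunLike.congr_fun h (1 : C(K, ℝ))
  have h2 : (ContinuousMap.evalCLM ℝ x₀) (1 : C(K, ℝ)) = 1 := rfl
  rw [h2] at h1
  simpa using h1
end

section
/- Let L be a nonempty linearly ordered compact connected separable metrizable space with more than one point. Then L is order isomorphic to the unit interval [0,1] (with its usual order). -/
open Set TopologicalSpace

section Aux

variable {L : Type*} [LinearOrder L] [TopologicalSpace L] [OrderTopology L]

theorem aux_exists_between [PreconnectedSpace L] {x y : L} (h : x < y) :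
    ∃ z, x < z ∧ z < y := by
  by_contra hcon
  push_neg at hcon
  have hcover : (univ : Set L) ⊆ Iio y ∪ Ioi x := fun z _ => by
    rcases lt_or_ge z y with h' | h'
    · exact Or.inl h'
    · exact Or.inr (lt_of_lt_of_le h h')
  obtain ⟨z, -, hz1, hz2⟩ := isPreconnected_univ (Iio y) (Ioi x) isOpen_Iio isOpen_Ioi hcover
    ⟨x, trivial, h⟩ ⟨y, trivial, h⟩
  exact absurd hz1 (not_lt.2 (hcon z hz2))

theorem aux_exists_isLUB [CompactSpace L] [Nonempty L] {s : Set L} (hs : s.Nonempty) :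
    ∃ x, IsLUB s x := by
  have hclosed : IsClosed (upperBounds s) := by
    have : upperBounds s = ⋂ x ∈ s, Ici x := by
      ext z; simp [upperBounds, mem_iInter]
    rw [this]
    exact isClosed_biInter fun x _ => isClosed_Ici
  obtain ⟨b, -, hb⟩ := (isCompact_univ : IsCompact (univ : Set L)).exists_isGreatest univ_nonempty
  have hne : (upperBounds s).Nonempty := ⟨b, fun x _ => hb (mem_univ x)⟩
  exact hclosed.isCompact.exists_isLeast hne

end Aux

theorem compact_connected_separable_line_orderIso_unitInterval
    (L : Type*) [LinearOrder L] [TopologicalSpace L] [OrderTopology L]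
    [CompactSpace L] [ConnectedSpace L] [TopologicalSpace.SeparableSpace L]
    [TopologicalSpace.MetrizableSpace L] [Nontrivial L] :
    Nonempty (L ≃o Set.Icc (0:ℝ) 1) := by
  classical
  -- least and greatest elements
  obtain ⟨a, -, ha⟩ := isCompact_univ.exists_isLeast (univ_nonempty (α := L))
  obtain ⟨b, -, hb⟩ := isCompact_univ.exists_isGreatest (univ_nonempty (α := L))
  have ha' : ∀ x : L, a ≤ x := fun x => ha (mem_univ x)
  have hb' : ∀ x : L, x ≤ b := fun x => hb (mem_univ x)
  have hab : a < b := by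
    obtain ⟨x, y, hxy⟩ := exists_pair_ne L
    rcases lt_or_gt_of_ne hxy with h | h
    · exact lt_of_le_of_lt (ha' x) (lt_of_lt_of_le h (hb' y))
    · exact lt_of_le_of_lt (ha' y) (lt_of_lt_of_le h (hb' x))
  -- countable topologically dense set
  obtain ⟨T, hTc, hTd⟩ := TopologicalSpace.exists_countable_dense L
  -- order-density of T between any two points
  have hTbtwn : ∀ x y : L, x < y → ∃ t ∈ T, x < t ∧ t < y := by
    intro x y hxy
    obtain ⟨z, hz1, hz2⟩ := aux_exists_between hxy
    obtain ⟨t, ht1, ht2⟩ := hTd.exists_mem_open isOpen_Ioo ⟨z, hz1, hz2⟩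
    exact ⟨t, ht1, ht2.1, ht2.2⟩
  have hdense : DenselyOrdered L :=
    ⟨fun x y hxy => (aux_exists_between hxy).imp fun z hz => ⟨hz.1, hz.2⟩⟩
  -- the countable order-dense set without endpoints
  set s : Set L := T ∩ Ioo a b with hs_def
  have hsbtwn : ∀ x y : L, x < y → ∃ t ∈ s, x < t ∧ t < y := by
    intro x y hxy
    obtain ⟨t, ht, ht1, ht2⟩ := hTbtwn x y hxy
    exact ⟨t, ⟨ht, lt_of_le_of_lt (ha' x) ht1, lt_of_lt_of_le ht2 (hb' y)⟩, ht1, ht2⟩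
  haveI : Countable s := ((hTc.mono inter_subset_left)).to_subtype
  haveI : Nonempty s := by
    obtain ⟨t, ht, -, -⟩ := hsbtwn a b hab
    exact ⟨⟨t, ht⟩⟩
  haveI : DenselyOrdered s := by
    constructor
    rintro ⟨u, hu⟩ ⟨v, hv⟩ huv
    obtain ⟨t, ht, ht1, ht2⟩ := hsbtwn u v (by exact_mod_cast huv)
    exact ⟨⟨t, ht⟩, ht1, ht2⟩
  haveI : NoMinOrder s := by
    constructor
    rintro ⟨u, hu⟩
    obtain ⟨t, ht, ht1, ht2⟩ := hsbtwn a u hu.2.1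
    exact ⟨⟨t, ht⟩, ht2⟩
  haveI : NoMaxOrder s := by
    constructor
    rintro ⟨u, hu⟩
    obtain ⟨t, ht, ht1, ht2⟩ := hsbtwn u b hu.2.2
    exact ⟨⟨t, ht⟩, ht1⟩
  -- order isomorphism with rationals in (0,1)
  haveI : Nonempty (Ioo (0:ℚ) 1) := ⟨⟨1/2, by norm_num⟩⟩
  obtain ⟨e⟩ := Order.iso_of_countable_dense s (Ioo (0:ℚ) 1)
  set ε : s → ℝ := fun t => ((e t : ℚ) : ℝ) with hε_def
  have hε_mono : StrictMono ε := fun u v huv => by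
    simp only [hε_def]
    exact_mod_cast Subtype.coe_lt_coe.2 (e.lt_iff_lt.2 huv)
  have hε_pos : ∀ t, 0 < ε t := fun t => by
    simp only [hε_def]; exact_mod_cast (e t).2.1
  have hε_lt1 : ∀ t, ε t < 1 := fun t => by
    simp only [hε_def]; exact_mod_cast (e t).2.2
  -- the extension to L
  set A : L → Set ℝ := fun x => insert 0 (ε '' {t : s | (t : L) < x}) with hA_def
  have hA0 : ∀ x, (0:ℝ) ∈ A x := fun x => mem_insert _ _
  have hAbdd : ∀ x, BddAbove (A x) := by
    intro x
    refine ⟨1, ?_⟩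
    rintro r (rfl | ⟨t, -, rfl⟩)
    · exact zero_le_one
    · exact (hε_lt1 t).le
  set g : L → ℝ := fun x => sSup (A x) with hg_def
  have hg0 : ∀ x, 0 ≤ g x := fun x => le_csSup (hAbdd x) (hA0 x)
  have hg1 : ∀ x, g x ≤ 1 := fun x => csSup_le ⟨0, hA0 x⟩ (by
    rintro r (rfl | ⟨t, -, rfl⟩)
    · exact zero_le_one
    · exact (hε_lt1 t).le)
  have hg_mem : ∀ x, g x ∈ Icc (0:ℝ) 1 := fun x => ⟨hg0 x, hg1 x⟩
  -- strict monotonicity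
  have hg_strict : StrictMono g := by
    intro x y hxy
    obtain ⟨t, ht, ht1, ht2⟩ := hsbtwn x y hxy
    obtain ⟨t', ht', ht1', ht2'⟩ := hsbtwn t y ht2
    have h1 : g x ≤ ε ⟨t, ht⟩ := by
      apply csSup_le ⟨0, hA0 x⟩
      rintro r (rfl | ⟨u, hu, rfl⟩)
      · exact (hε_pos _).le
      · exact (hε_mono (show u < (⟨t, ht⟩ : s) from Subtype.coe_lt_coe.1 (lt_trans (show (u:L) < x from hu) ht1))).le
    have h2 : ε (⟨t, ht⟩ : s) < ε ⟨t', ht'⟩ := hε_mono (by exact_mod_cast ht1')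
    have h3 : ε (⟨t', ht'⟩ : s) ≤ g y :=
      le_csSup (hAbdd y) (Or.inr ⟨⟨t', ht'⟩, ht2', rfl⟩)
    exact lt_of_le_of_lt h1 (lt_of_lt_of_le h2 h3)
  -- surjectivity onto [0,1]
  have hg_surj : ∀ c ∈ Icc (0:ℝ) 1, ∃ x, g x = c := by
    rintro c ⟨hc0, hc1⟩
    obtain ⟨x, hx⟩ := aux_exists_isLUB (s := insert a ((↑) '' {t : s | ε t < c}))
      ⟨a, mem_insert _ _⟩
    refine ⟨x, le_antisymm ?_ ?_⟩
    · -- g x ≤ c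
      apply csSup_le ⟨0, hA0 x⟩
      rintro r (rfl | ⟨u, hu, rfl⟩)
      · exact hc0
      · by_contra hlt
        push_neg at hlt
        have hub : (u : L) ∈ upperBounds (insert a ((↑) '' {t : s | ε t < c})) := by
          rintro z (rfl | ⟨v, hv, rfl⟩)
          · exact (u.2.2.1).le
          · exact (hε_mono.lt_iff_lt.1 (lt_of_lt_of_le hv hlt.le)).le
        exact absurd (hx.2 hub) (not_le.2 hu)
    · -- c ≤ g x
      by_contra hlt
      push_neg at hlt
      obtain ⟨q1, hq11, hq12⟩ := exists_rat_btwn hlt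
      obtain ⟨q2, hq21, hq22⟩ := exists_rat_btwn hq12
      have hq1mem : q1 ∈ Ioo (0:ℚ) 1 := by
        constructor
        · exact_mod_cast lt_of_le_of_lt (hg0 x) hq11
        · exact_mod_cast lt_of_lt_of_le (lt_trans hq21 hq22) hc1
      have hq2mem : q2 ∈ Ioo (0:ℚ) 1 := by
        constructor
        · exact_mod_cast lt_trans (lt_of_le_of_lt (hg0 x) hq11) hq21
        · exact_mod_cast lt_of_lt_of_le hq22 hc1
      set t1 := e.symm ⟨q1, hq1mem⟩ with ht1_def
      set t2 := e.symm ⟨q2, hq2mem⟩ with ht2_def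
      have het1 : ε t1 = (q1 : ℝ) := by simp [hε_def, ht1_def]
      have het2 : ε t2 = (q2 : ℝ) := by simp [hε_def, ht2_def]
      have ht2x : (t2 : L) ≤ x := hx.1 (Or.inr ⟨t2, by rw [mem_setOf_eq, het2]; exact hq22, rfl⟩)
      have ht12 : t1 < t2 := by
        rw [ht1_def, ht2_def, e.symm.lt_iff_lt]
        exact Subtype.mk_lt_mk.2 (by exact_mod_cast hq21)
      have ht1x : (t1 : L) < x := lt_of_lt_of_le (by exact_mod_cast ht12) ht2x
      have : ε t1 ≤ g x := le_csSup (hAbdd x) (Or.inr ⟨t1, ht1x, rfl⟩)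
      rw [het1] at this
      exact absurd (lt_of_le_of_lt this hq11) (lt_irrefl _)
  -- assemble the order isomorphism
  set g' : L → Icc (0:ℝ) 1 := fun x => ⟨g x, hg_mem x⟩ with hg'_def
  have hg'_strict : StrictMono g' := fun x y hxy => by
    exact_mod_cast hg_strict hxy
  have hg'_surj : Function.Surjective g' := by
    rintro ⟨c, hc⟩
    obtain ⟨x, hx⟩ := hg_surj c hc
    exact ⟨x, Subtype.ext hx⟩
  exact ⟨StrictMono.orderIsoOfSurjective g' hg'_strict hg'_surj⟩
end
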